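/- arXiv:2303.16786 — 11 statements merged into one kernel-verified Lean document; each statement's English description precedes it below -/
import Mathlib

section
/- Let f : ℝⁿ → ℝ be μ-strongly convex and L-smooth, let X ⊆ ℝⁿ be nonempty, closed and convex, and let x* be the minimizer of f over X. Let 0 < t ≤ 1/L and define the projected gradient step T(x) = proj_X(x - t∇f(x)). Then the sequence x^{k+1} = T(x^k) satisfies ‖x^k - x*‖² ≤ (1 - tμ)^k ‖x^0 - x*‖² for all k ≥ 0. -/
open scoped RealInnerProductSpace

/-- `p` is the Euclidean projection of `z` onto the set `X`. -/
def IsProj {n : ℕ} (X : Set (EuclideanSpace ℝ (Fin n))) (z p : EuclideanSpace ℝ (Fin n)) : Prop :=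
  p ∈ X ∧ ∀ y ∈ X, ‖p - z‖ ≤ ‖y - z‖

private lemma aux_small (c B : ℝ) (hB : 0 ≤ B)
    (h : ∀ s : ℝ, 0 < s → s ≤ 1 → 0 ≤ s * c + s ^ 2 * B) : 0 ≤ c := by
  by_contra hc
  push_neg at hc
  rcases eq_or_lt_of_le hB with hB0 | hB0
  · have := h 1 one_pos le_rfl
    nlinarith
  · set s := min 1 (-c / (2 * B)) with hs
    have hs0 : 0 < s := lt_min one_pos (div_pos (neg_pos.mpr hc) (by positivity))
    have hs1 : s ≤ 1 := min_le_left _ _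
    have hs2 : s ≤ -c / (2 * B) := min_le_right _ _
    have h1 := h s hs0 hs1
    have h2 : s * (2 * B) ≤ -c := (le_div_iff₀ (by positivity)).mp hs2
    nlinarith [mul_le_mul_of_nonneg_left h2 hs0.le, mul_pos hs0 (neg_pos.mpr hc)]

set_option maxHeartbeats 1000000 in
theorem stmt0 {n : ℕ} (f : EuclideanSpace ℝ (Fin n) → ℝ)
    (g : EuclideanSpace ℝ (Fin n) → EuclideanSpace ℝ (Fin n))
    (X : Set (EuclideanSpace ℝ (Fin n)))
    (hXne : X.Nonempty) (hXcl : IsClosed X) (hXcv : Convex ℝ X)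
    (μ L t : ℝ) (hμ : 0 < μ) (hL : 0 < L) (ht : 0 < t) (ht' : t ≤ 1 / L)
    (hsc : ∀ x y, μ / 2 * ‖x - y‖ ^ 2 ≤ f x - f y - ⟪g y, x - y⟫)
    (hsm : ∀ x y, f x - f y - ⟪g y, x - y⟫ ≤ L / 2 * ‖x - y‖ ^ 2)
    (xs : EuclideanSpace ℝ (Fin n)) (hxsX : xs ∈ X) (hxs : ∀ y ∈ X, f xs ≤ f y)
    (x : ℕ → EuclideanSpace ℝ (Fin n)) (hx0 : x 0 ∈ X)
    (hstep : ∀ k, IsProj X (x k - t • g (x k)) (x (k + 1))) :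
    ∀ k, ‖x k - xs‖ ^ 2 ≤ (1 - t * μ) ^ k * ‖x 0 - xs‖ ^ 2 := by
  have hL0 : L ≠ 0 := hL.ne'
  -- cocoercivity, base form
  have key : ∀ a b, ‖g a - g b‖ ^ 2 ≤ 2 * L * (f a - f b - ⟪g b, a - b⟫) := by
    intro a b
    set w := a - L⁻¹ • (g a - g b) with hw
    have h1 := hsc w b
    have h2 := hsm w a
    have hwb : w - b = (a - b) - L⁻¹ • (g a - g b) := by rw [hw]; abel
    have hwa : w - a = -(L⁻¹ • (g a - g b)) := by rw [hw]; abel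
    have e1 : ⟪g b, w - b⟫ = ⟪g b, a - b⟫ - L⁻¹ * ⟪g b, g a - g b⟫ := by
      rw [hwb, inner_sub_right, real_inner_smul_right]
    have e2 : ⟪g a, w - a⟫ = -(L⁻¹ * ⟪g a, g a - g b⟫) := by
      rw [hwa, inner_neg_right, real_inner_smul_right]
    have e3 : ‖w - a‖ ^ 2 = L⁻¹ ^ 2 * ‖g a - g b‖ ^ 2 := by
      rw [hwa, norm_neg, norm_smul, mul_pow, Real.norm_eq_abs, sq_abs]
    have e4 : ⟪g a, g a - g b⟫ - ⟪g b, g a - g b⟫ = ‖g a - g b‖ ^ 2 := by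
      rw [← inner_sub_left, real_inner_self_eq_norm_sq]
    have hinv : L * L⁻¹ = 1 := mul_inv_cancel₀ hL0
    have hμ2 : 0 ≤ μ / 2 * ‖w - b‖ ^ 2 := by positivity
    rw [e1] at h1
    rw [e2, e3] at h2
    have e5 : L / 2 * (L⁻¹ ^ 2 * ‖g a - g b‖ ^ 2) = L⁻¹ / 2 * ‖g a - g b‖ ^ 2 := by
      field_simp
    have e4' : L⁻¹ * ⟪g a, g a - g b⟫ - L⁻¹ * ⟪g b, g a - g b⟫
        = L⁻¹ * ‖g a - g b‖ ^ 2 := by rw [← mul_sub, e4]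
    rw [e5] at h2
    have h7 : L⁻¹ / 2 * ‖g a - g b‖ ^ 2 ≤ f a - f b - ⟪g b, a - b⟫ := by linarith
    have h8 := mul_le_mul_of_nonneg_left h7 (by positivity : (0:ℝ) ≤ 2 * L)
    have e6 : 2 * L * (L⁻¹ / 2 * ‖g a - g b‖ ^ 2) = ‖g a - g b‖ ^ 2 := by
      field_simp
    linarith
  -- strong monotonicity
  have mono : ∀ a b, μ * ‖a - b‖ ^ 2 ≤ ⟪g a - g b, a - b⟫ := by
    intro a b
    have h1 := hsc a b
    have h2 := hsc b a
    have hn : ‖b - a‖ = ‖a - b‖ := norm_sub_rev b a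
    have e : ⟪g a - g b, a - b⟫
        = (f b - f a - ⟪g a, b - a⟫) + (f a - f b - ⟪g b, a - b⟫) := by
      simp [inner_sub_left, inner_sub_right]; ring
    rw [hn] at h2
    rw [e]; linarith
  -- cocoercivity
  have coco : ∀ a b, ‖g a - g b‖ ^ 2 ≤ L * ⟪g a - g b, a - b⟫ := by
    intro a b
    have h1 := key a b
    have h2 := key b a
    have hn : ‖g b - g a‖ = ‖g a - g b‖ := norm_sub_rev _ _
    have e : ⟪g a - g b, a - b⟫
        = (f b - f a - ⟪g a, b - a⟫) + (f a - f b - ⟪g b, a - b⟫) := by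
      simp [inner_sub_left, inner_sub_right]; ring
    rw [hn] at h2
    rw [e]; nlinarith
  -- optimality at xs
  have opt : ∀ y ∈ X, 0 ≤ ⟪g xs, y - xs⟫ := by
    intro y hy
    apply aux_small _ (L / 2 * ‖y - xs‖ ^ 2) (by positivity)
    intro s hs0 hs1
    set w := xs + s • (y - xs) with hwdef
    have hwX : w ∈ X := by
      have := hXcv hxsX hy (by linarith : (0:ℝ) ≤ 1 - s) hs0.le (by ring)
      convert this using 1
      rw [hwdef]; module
    have h1 := hxs w hwX
    have h2 := hsm w xs
    have hws : w - xs = s • (y - xs) := by rw [hwdef]; abel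
    have e1 : ⟪g xs, w - xs⟫ = s * ⟪g xs, y - xs⟫ := by
      rw [hws, real_inner_smul_right]
    have e2 : ‖w - xs‖ ^ 2 = s ^ 2 * ‖y - xs‖ ^ 2 := by
      rw [hws, norm_smul, mul_pow, Real.norm_eq_abs, sq_abs]
    rw [e1, e2] at h2
    nlinarith
  -- projection variational inequality
  have projVI : ∀ z p, IsProj X z p → ∀ y ∈ X, ⟪z - p, y - p⟫ ≤ 0 := by
    intro z p hp y hy
    obtain ⟨hpX, hmin⟩ := hp
    have h0 : 0 ≤ ⟪p - z, y - p⟫ := by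
      have := aux_small (2 * ⟪p - z, y - p⟫) (‖y - p‖ ^ 2) (by positivity) ?_
      · linarith
      intro s hs0 hs1
      set q := p + s • (y - p) with hqdef
      have hqX : q ∈ X := by
        have := hXcv hpX hy (by linarith : (0:ℝ) ≤ 1 - s) hs0.le (by ring)
        convert this using 1
        rw [hqdef]; module
      have h1 := hmin q hqX
      have hq : q - z = (p - z) + s • (y - p) := by rw [hqdef]; abel
      have h2 : ‖q - z‖ ^ 2
          = ‖p - z‖ ^ 2 + 2 * (s * ⟪p - z, y - p⟫) + s ^ 2 * ‖y - p‖ ^ 2 := by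
        rw [hq, norm_add_sq_real, real_inner_smul_right, norm_smul, mul_pow,
          Real.norm_eq_abs, sq_abs]
      have h3 : ‖p - z‖ ^ 2 ≤ ‖q - z‖ ^ 2 := by
        have := norm_nonneg (p - z)
        nlinarith
      nlinarith
    have : ⟪z - p, y - p⟫ = -⟪p - z, y - p⟫ := by
      rw [← inner_neg_left]; congr 1; abel
    linarith [this ▸ neg_nonpos_of_nonneg h0]
  -- one-step contraction
  have step : ∀ k, ‖x (k + 1) - xs‖ ^ 2 ≤ (1 - t * μ) * ‖x k - xs‖ ^ 2 := by
    intro k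
    obtain ⟨hpX, _⟩ := hstep k
    set p := x (k + 1) with hp
    set z := x k - t • g (x k) with hz
    set w := xs - t • g xs with hwd
    have vi1 : ⟪z - p, xs - p⟫ ≤ 0 := projVI z p (hstep k) xs hxsX
    have vi2 : 0 ≤ ⟪g xs, p - xs⟫ := opt p hpX
    have hzw : z - w = (z - p) + (p - xs) + (xs - w) := by abel
    have e : ⟪z - w, p - xs⟫
        = ⟪z - p, p - xs⟫ + ‖p - xs‖ ^ 2 + ⟪xs - w, p - xs⟫ := by
      rw [hzw, inner_add_left, inner_add_left, real_inner_self_eq_norm_sq]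
    have s1 : ⟪z - p, p - xs⟫ = -⟪z - p, xs - p⟫ := by
      rw [← inner_neg_right]; congr 1; abel
    have s2 : ⟪xs - w, p - xs⟫ = t * ⟪g xs, p - xs⟫ := by
      have hxw : xs - w = t • g xs := by rw [hwd]; abel
      rw [hxw, real_inner_smul_left]
    have h1 : ‖p - xs‖ ^ 2 ≤ ⟪z - w, p - xs⟫ := by
      rw [e, s1, s2]
      nlinarith [mul_nonneg ht.le vi2]
    have h2 : ⟪z - w, p - xs⟫ ≤ ‖z - w‖ * ‖p - xs‖ := real_inner_le_norm _ _
    have h3 : ‖p - xs‖ ^ 2 ≤ ‖z - w‖ ^ 2 := by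
      nlinarith [norm_nonneg (z - w), norm_nonneg (p - xs),
        sq_nonneg (‖z - w‖ - ‖p - xs‖)]
    have hzw2 : z - w = (x k - xs) - t • (g (x k) - g xs) := by
      rw [hz, hwd, smul_sub]; abel
    have hts : ‖t • (g (x k) - g xs)‖ ^ 2 = t ^ 2 * ‖g (x k) - g xs‖ ^ 2 := by
      rw [norm_smul, mul_pow, Real.norm_eq_abs, sq_abs]
    have expand : ‖z - w‖ ^ 2
        = ‖x k - xs‖ ^ 2 - 2 * (t * ⟪g (x k) - g xs, x k - xs⟫)
          + t ^ 2 * ‖g (x k) - g xs‖ ^ 2 := by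
      rw [hzw2, norm_sub_sq_real, hts, real_inner_smul_right,
        real_inner_comm (x k - xs) (g (x k) - g xs)]
    have I := mono (x k) xs
    have C := coco (x k) xs
    have I0 : 0 ≤ ⟪g (x k) - g xs, x k - xs⟫ := le_trans (by positivity) I
    have htL : t * L ≤ 1 := (le_div_iff₀ hL).mp ht'
    have hA : t ^ 2 * ‖g (x k) - g xs‖ ^ 2 ≤ t ^ 2 * (L * ⟪g (x k) - g xs, x k - xs⟫) :=
      mul_le_mul_of_nonneg_left C (sq_nonneg t)
    have hB : t ^ 2 * (L * ⟪g (x k) - g xs, x k - xs⟫) ≤ t * ⟪g (x k) - g xs, x k - xs⟫ := by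
      nlinarith [mul_nonneg ht.le I0]
    have hC : t * (μ * ‖x k - xs‖ ^ 2) ≤ t * ⟪g (x k) - g xs, x k - xs⟫ :=
      mul_le_mul_of_nonneg_left I ht.le
    nlinarith [h3, expand]
  rcases subsingleton_or_nontrivial (EuclideanSpace ℝ (Fin n)) with hsub | hnt
  · intro k
    have h0 : x k = xs := Subsingleton.elim _ _
    have h0' : x 0 = xs := Subsingleton.elim _ _
    simp [h0, h0']
  · have hμL : μ ≤ L := by
      obtain ⟨v, w, hvw⟩ := exists_pair_ne (EuclideanSpace ℝ (Fin n))
      have h1 := hsc v w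
      have h2 := hsm v w
      have hpos : 0 < ‖v - w‖ := by
        rw [norm_pos_iff, sub_ne_zero]; exact hvw
      have hN : 0 < ‖v - w‖ ^ 2 := by positivity
      nlinarith [hN]
    have h1tμ : 0 ≤ 1 - t * μ := by
      have h1 : t * μ ≤ t * L := mul_le_mul_of_nonneg_left hμL ht.le
      have h2 : t * L ≤ 1 := (le_div_iff₀ hL).mp ht'
      linarith
    intro k
    induction k with
    | zero => simp
    | succ k ih =>
      calc ‖x (k + 1) - xs‖ ^ 2 ≤ (1 - t * μ) * ‖x k - xs‖ ^ 2 := step k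
        _ ≤ (1 - t * μ) * ((1 - t * μ) ^ k * ‖x 0 - xs‖ ^ 2) :=
            mul_le_mul_of_nonneg_left ih h1tμ
        _ = (1 - t * μ) ^ (k + 1) * ‖x 0 - xs‖ ^ 2 := by ring
end

section
/- Let f : ℝⁿ → ℝ be μ-strongly convex and L-smooth, let X ⊆ ℝⁿ be nonempty, closed and convex, 0 < t ≤ 1/L, T(x) = proj_X(x - t∇f(x)), and x* the minimizer of f over X. Then the projected gradient iterates x^{k+1} = T(x^k) satisfy f(x^k) - f(x*) ≤ (1/(2t))(1 - tμ)^k ‖x^0 - x*‖² for all k ≥ 1. -/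
open scoped RealInnerProductSpace

lemma proj_inner {n : ℕ} {X : Set (EuclideanSpace ℝ (Fin n))} (hXcv : Convex ℝ X)
    {z p : EuclideanSpace ℝ (Fin n)} (hp : IsProj X z p) :
    ∀ y ∈ X, ⟪z - p, y - p⟫ ≤ 0 := by
  intro y hy
  by_contra h
  push_neg at h
  set c := ⟪z - p, y - p⟫ with hc
  have hyp : y ≠ p := by
    intro h'
    rw [h', sub_self, inner_zero_right] at hc
    rw [hc] at h
    exact lt_irrefl 0 h
  have hnorm : 0 < ‖y - p‖ ^ 2 := pow_pos (norm_sub_pos_iff.mpr hyp) 2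
  set θ := min 1 (c / ‖y - p‖ ^ 2) with hθ
  have hθ0 : 0 < θ := lt_min one_pos (div_pos h hnorm)
  have hθ1 : θ ≤ 1 := min_le_left _ _
  have hmem : p + θ • (y - p) ∈ X := by
    have h2 := hXcv hp.1 hy (by linarith : (0:ℝ) ≤ 1 - θ) hθ0.le (by ring)
    convert h2 using 1
    module
  have hle := hp.2 _ hmem
  have hsq : ‖p - z‖ ^ 2 ≤ ‖p + θ • (y - p) - z‖ ^ 2 := by
    have := pow_le_pow_left₀ (norm_nonneg _) hle 2
    linarith
  have hexp : ‖p + θ • (y - p) - z‖ ^ 2 = ‖p - z‖ ^ 2 - 2 * θ * c + θ ^ 2 * ‖y - p‖ ^ 2 := by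
    have he : p + θ • (y - p) - z = (p - z) + θ • (y - p) := by module
    rw [he, norm_add_sq_real, real_inner_smul_right, norm_smul, Real.norm_eq_abs,
      mul_pow, sq_abs]
    have hip : ⟪p - z, y - p⟫ = -c := by
      rw [hc, ← neg_sub z p, inner_neg_left]
    rw [hip]; ring
  have hθc : θ * ‖y - p‖ ^ 2 ≤ c := by
    have := min_le_right 1 (c / ‖y - p‖ ^ 2)
    calc θ * ‖y - p‖ ^ 2 ≤ (c / ‖y - p‖ ^ 2) * ‖y - p‖ ^ 2 := by
          exact mul_le_mul_of_nonneg_right this hnorm.le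
      _ = c := div_mul_cancel₀ _ hnorm.ne'
  nlinarith [hθ0, h, hsq, hexp, hθc]

lemma alg_lemma (μ L t A B C I G d : ℝ) (ht : 0 < t) (hLt : L * t ≤ 1) (hA : 0 ≤ A)
    (h1 : d ≤ L / 2 * A - μ / 2 * B - G) (hpr : I ≤ t * G) (hid : 2 * I = A + C - B) :
    d ≤ 1 / (2 * t) * ((1 - t * μ) * B - C) := by
  have hG : I / t ≤ G := (div_le_iff₀ ht).mpr (by linarith)
  have h2 : d ≤ L / 2 * A - μ / 2 * B - I / t := by linarith
  have hI : I = (A + C - B) / 2 := by linarith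
  subst hI
  have e : 1 / (2 * t) * ((1 - t * μ) * B - C) - (L / 2 * A - μ / 2 * B - (A + C - B) / 2 / t)
      = (1 - L * t) * A / (2 * t) := by
    field_simp
    ring
  have hpos : 0 ≤ (1 - L * t) * A / (2 * t) :=
    div_nonneg (mul_nonneg (by linarith) hA) (by linarith)
  linarith

lemma step_lemma {n : ℕ} (f : EuclideanSpace ℝ (Fin n) → ℝ)
    (g : EuclideanSpace ℝ (Fin n) → EuclideanSpace ℝ (Fin n))
    {X : Set (EuclideanSpace ℝ (Fin n))} (hXcv : Convex ℝ X)
    {μ L t : ℝ} (hL : 0 < L) (ht : 0 < t) (ht' : t ≤ 1 / L)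
    (hsc : ∀ x y, μ / 2 * ‖x - y‖ ^ 2 ≤ f x - f y - ⟪g y, x - y⟫)
    (hsm : ∀ x y, f x - f y - ⟪g y, x - y⟫ ≤ L / 2 * ‖x - y‖ ^ 2)
    {xs : EuclideanSpace ℝ (Fin n)} (hxsX : xs ∈ X)
    {a p : EuclideanSpace ℝ (Fin n)} (hp : IsProj X (a - t • g a) p) :
    f p - f xs ≤ 1 / (2 * t) * ((1 - t * μ) * ‖a - xs‖ ^ 2 - ‖p - xs‖ ^ 2) := by
  have hproj := proj_inner hXcv hp xs hxsX
  have hproj' : ⟪a - p, xs - p⟫ ≤ t * ⟪g a, xs - p⟫ := by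
    have he : a - t • g a - p = (a - p) - t • g a := by module
    rw [he, inner_sub_left, real_inner_smul_left] at hproj
    linarith
  have h1 := hsm p a
  have h2 := hsc xs a
  have hid : 2 * ⟪a - p, xs - p⟫ = ‖a - p‖ ^ 2 + ‖p - xs‖ ^ 2 - ‖a - xs‖ ^ 2 := by
    have h3 := norm_sub_sq_real (a - p) (xs - p)
    have he : (a - p) - (xs - p) = a - xs := by module
    rw [he] at h3
    have : ‖xs - p‖ ^ 2 = ‖p - xs‖ ^ 2 := by rw [norm_sub_rev]
    linarith
  have hgsplit : ⟪g a, p - a⟫ - ⟪g a, xs - a⟫ = -⟪g a, xs - p⟫ := by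
    rw [← inner_sub_right, ← inner_neg_right]
    congr 1
    module
  have hLt : L * t ≤ 1 := by
    have := mul_le_mul_of_nonneg_left ht' hL.le
    rw [mul_one_div_cancel hL.ne'] at this
    linarith
  have hnsym : ‖p - a‖ ^ 2 = ‖a - p‖ ^ 2 := by rw [norm_sub_rev]
  have hnsym2 : ‖xs - a‖ ^ 2 = ‖a - xs‖ ^ 2 := by rw [norm_sub_rev]
  rw [hnsym] at h1
  rw [hnsym2] at h2
  exact alg_lemma μ L t (‖a - p‖ ^ 2) (‖a - xs‖ ^ 2) (‖p - xs‖ ^ 2)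
    ⟪a - p, xs - p⟫ ⟪g a, xs - p⟫ (f p - f xs) ht hLt (by positivity)
    (by linarith) hproj' hid

theorem stmt1 {n : ℕ} (f : EuclideanSpace ℝ (Fin n) → ℝ)
    (g : EuclideanSpace ℝ (Fin n) → EuclideanSpace ℝ (Fin n))
    (X : Set (EuclideanSpace ℝ (Fin n)))
    (hXne : X.Nonempty) (hXcl : IsClosed X) (hXcv : Convex ℝ X)
    (μ L t : ℝ) (hμ : 0 < μ) (hL : 0 < L) (ht : 0 < t) (ht' : t ≤ 1 / L)
    (hsc : ∀ x y, μ / 2 * ‖x - y‖ ^ 2 ≤ f x - f y - ⟪g y, x - y⟫)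
    (hsm : ∀ x y, f x - f y - ⟪g y, x - y⟫ ≤ L / 2 * ‖x - y‖ ^ 2)
    (xs : EuclideanSpace ℝ (Fin n)) (hxsX : xs ∈ X) (hxs : ∀ y ∈ X, f xs ≤ f y)
    (x : ℕ → EuclideanSpace ℝ (Fin n)) (hx0 : x 0 ∈ X)
    (hstep : ∀ k, IsProj X (x k - t • g (x k)) (x (k + 1))) :
    ∀ k ≥ 1, f (x k) - f xs ≤ 1 / (2 * t) * (1 - t * μ) ^ k * ‖x 0 - xs‖ ^ 2 := by
  have hmem : ∀ k, x k ∈ X := by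
    intro k
    cases k with
    | zero => exact hx0
    | succ j => exact (hstep j).1
  rcases Nat.eq_zero_or_pos n with hn | hn
  · subst hn
    intro k hk
    have hxe : x k = xs := Subsingleton.elim _ _
    have hxe0 : x 0 = xs := Subsingleton.elim _ _
    rw [hxe, hxe0]
    simp
  · have hμL : μ ≤ L := by
      set u : EuclideanSpace ℝ (Fin n) := EuclideanSpace.single (⟨0, hn⟩ : Fin n) (1 : ℝ) with hu
      have hn1 : ‖u - 0‖ ^ 2 = 1 := by
        rw [sub_zero, hu, EuclideanSpace.norm_single]
        norm_num
      have h3 := le_trans (hsc u 0) (hsm u 0)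
      rw [hn1] at h3
      linarith
    have hq : 0 ≤ 1 - t * μ := by
      have h4 : t * μ ≤ t * L := mul_le_mul_of_nonneg_left hμL ht.le
      have h5 : t * L ≤ 1 := by
        have := mul_le_mul_of_nonneg_right ht' hL.le
        rw [one_div_mul_cancel hL.ne'] at this
        linarith
      linarith
    have hs2t : (0:ℝ) < 1 / (2 * t) := by positivity
    have hdist : ∀ k, ‖x k - xs‖ ^ 2 ≤ (1 - t * μ) ^ k * ‖x 0 - xs‖ ^ 2 := by
      intro k
      induction k with
      | zero => simp
      | succ j ih =>
        have hsl := step_lemma f g hXcv hL ht ht' hsc hsm hxsX (hstep j)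
        have hfge : f xs ≤ f (x (j + 1)) := hxs _ (hmem (j + 1))
        have hX0 : 0 ≤ 1 / (2 * t) * ((1 - t * μ) * ‖x j - xs‖ ^ 2 - ‖x (j + 1) - xs‖ ^ 2) := by
          linarith
        have hX : 0 ≤ (1 - t * μ) * ‖x j - xs‖ ^ 2 - ‖x (j + 1) - xs‖ ^ 2 :=
          (mul_nonneg_iff_of_pos_left hs2t).mp hX0
        calc ‖x (j + 1) - xs‖ ^ 2 ≤ (1 - t * μ) * ‖x j - xs‖ ^ 2 := by linarith
          _ ≤ (1 - t * μ) * ((1 - t * μ) ^ j * ‖x 0 - xs‖ ^ 2) :=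
              mul_le_mul_of_nonneg_left ih hq
          _ = (1 - t * μ) ^ (j + 1) * ‖x 0 - xs‖ ^ 2 := by ring
    intro k hk
    obtain ⟨j, rfl⟩ : ∃ j, k = j + 1 := ⟨k - 1, (Nat.succ_pred_eq_of_pos hk).symm⟩
    have hsl := step_lemma f g hXcv hL ht ht' hsc hsm hxsX (hstep j)
    have hdj := hdist j
    have hC : (0:ℝ) ≤ ‖x (j + 1) - xs‖ ^ 2 := by positivity
    calc f (x (j + 1)) - f xs
        ≤ 1 / (2 * t) * ((1 - t * μ) * ‖x j - xs‖ ^ 2 - ‖x (j + 1) - xs‖ ^ 2) := hsl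
      _ ≤ 1 / (2 * t) * ((1 - t * μ) * ‖x j - xs‖ ^ 2) := by
          apply mul_le_mul_of_nonneg_left _ hs2t.le
          linarith
      _ ≤ 1 / (2 * t) * ((1 - t * μ) * ((1 - t * μ) ^ j * ‖x 0 - xs‖ ^ 2)) := by
          apply mul_le_mul_of_nonneg_left _ hs2t.le
          exact mul_le_mul_of_nonneg_left hdj hq
      _ = 1 / (2 * t) * (1 - t * μ) ^ (j + 1) * ‖x 0 - xs‖ ^ 2 := by ring
end

section
/- Let f : ℝⁿ → ℝ be convex and L-smooth, X ⊆ ℝⁿ nonempty closed convex, 0 < t ≤ 1/L, and T(x) = proj_X(x - t∇f(x)). Let x* be the minimizer of f over X. Then for every x ∈ X, ‖x - T(x)‖ ≤ 2‖x - x*‖. -/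
open scoped RealInnerProductSpace

theorem stmt3 {n : ℕ} (f : EuclideanSpace ℝ (Fin n) → ℝ)
    (g : EuclideanSpace ℝ (Fin n) → EuclideanSpace ℝ (Fin n))
    (X : Set (EuclideanSpace ℝ (Fin n)))
    (hXne : X.Nonempty) (hXcl : IsClosed X) (hXcv : Convex ℝ X)
    (L t : ℝ) (hL : 0 < L) (ht : 0 < t) (ht' : t ≤ 1 / L)
    (hcv : ∀ x y, 0 ≤ f x - f y - ⟪g y, x - y⟫)
    (hsm : ∀ x y, f x - f y - ⟪g y, x - y⟫ ≤ L / 2 * ‖x - y‖ ^ 2)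
    (xs : EuclideanSpace ℝ (Fin n)) (hxsX : xs ∈ X) (hxs : ∀ y ∈ X, f xs ≤ f y) :
    ∀ x ∈ X, ∀ Tx : EuclideanSpace ℝ (Fin n),
      IsProj X (x - t • g x) Tx → ‖x - Tx‖ ≤ 2 * ‖x - xs‖ := by
  intro x hx Tx hTx
  obtain ⟨hTX, hTmin⟩ := hTx
  set z := x - t • g x with hz
  -- variational inequality for the projection
  haveI : Nonempty X := ⟨⟨Tx, hTX⟩⟩
  have hinf : ‖z - Tx‖ = ⨅ w : X, ‖z - w‖ := by
    refine le_antisymm (le_ciInf fun w => ?_) ?_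
    · rw [norm_sub_rev, norm_sub_rev z (w : EuclideanSpace ℝ (Fin n))]
      exact hTmin w w.2
    · exact ciInf_le ⟨0, fun r ⟨w, hw⟩ => hw ▸ norm_nonneg _⟩ (⟨Tx, hTX⟩ : X)
  have hvi : ⟪z - Tx, xs - Tx⟫ ≤ 0 :=
    (norm_eq_iInf_iff_real_inner_le_zero hXcv hTX).mp hinf xs hxsX
  set a : ℝ := ⟪x - Tx, x - xs⟫ with ha
  set c : ℝ := ‖x - Tx‖ with hc
  set d : ℝ := ‖x - xs‖ with hd
  set p : ℝ := ⟪g x, xs - Tx⟫ with hp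
  set q : ℝ := ⟪g x, xs - x⟫ with hq
  set r : ℝ := ⟪g x, Tx - x⟫ with hr
  have e1 : r = q - p := by
    have h : Tx - x = (xs - x) - (xs - Tx) := by abel
    rw [hr, h, inner_sub_right, ← hq, ← hp]
  have e2 : ⟪x - Tx, xs - Tx⟫ = c ^ 2 - a := by
    have h : xs - Tx = (x - Tx) - (x - xs) := by abel
    rw [h, inner_sub_right, ← ha, real_inner_self_eq_norm_sq, ← hc]
  have e3 : (c ^ 2 - a) - t * p ≤ 0 := by
    have h : z - Tx = (x - Tx) - t • g x := by rw [hz]; abel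
    rw [h, inner_sub_left, real_inner_smul_left, e2, ← hp] at hvi
    linarith
  have h1 : f Tx - f x - r ≤ L / 2 * c ^ 2 := by
    have := hsm Tx x
    rwa [← hr, show ‖Tx - x‖ = c by rw [hc, norm_sub_rev]] at this
  have h2 : 0 ≤ f xs - f x - q := by have := hcv xs x; rwa [← hq] at this
  have h3 : f xs ≤ f Tx := hxs Tx hTX
  have hpc : p ≤ L / 2 * c ^ 2 := by linarith [e1, h1, h2, h3]
  have htL : t * L ≤ 1 := (le_div_iff₀ hL).mp ht'
  have hc2 : 0 ≤ c ^ 2 := sq_nonneg c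
  have htp : t * p ≤ 1 / 2 * c ^ 2 := by nlinarith [mul_le_mul_of_nonneg_left hpc ht.le]
  have hkey : c ^ 2 / 2 ≤ a := by linarith
  have hcs : a ≤ c * d := by rw [ha, hc, hd]; exact real_inner_le_norm _ _
  have hcn : 0 ≤ c := norm_nonneg _
  have hdn : 0 ≤ d := norm_nonneg _
  nlinarith [hkey, hcs, hcn, hdn]
end

section
/- Let f : ℝⁿ → ℝ be convex and L-smooth, X nonempty closed convex, 0 < t ≤ 1/L, T(x) = proj_X(x - t∇f(x)), and x* = argmin_{x∈X} f(x). Then for every x ∈ X, (1/2)‖x - T(x)‖² ≤ ⟨x - T(x), x - x*⟩. -/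
open scoped RealInnerProductSpace

theorem stmt4 {n : ℕ} (f : EuclideanSpace ℝ (Fin n) → ℝ)
    (g : EuclideanSpace ℝ (Fin n) → EuclideanSpace ℝ (Fin n))
    (X : Set (EuclideanSpace ℝ (Fin n)))
    (hXne : X.Nonempty) (hXcl : IsClosed X) (hXcv : Convex ℝ X)
    (L t : ℝ) (hL : 0 < L) (ht : 0 < t) (ht' : t ≤ 1 / L)
    (hcv : ∀ x y, 0 ≤ f x - f y - ⟪g y, x - y⟫)
    (hsm : ∀ x y, f x - f y - ⟪g y, x - y⟫ ≤ L / 2 * ‖x - y‖ ^ 2)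
    (xs : EuclideanSpace ℝ (Fin n)) (hxsX : xs ∈ X) (hxs : ∀ y ∈ X, f xs ≤ f y) :
    ∀ x ∈ X, ∀ Tx : EuclideanSpace ℝ (Fin n),
      IsProj X (x - t • g x) Tx → 1 / 2 * ‖x - Tx‖ ^ 2 ≤ ⟪x - Tx, x - xs⟫ := by
  intro x hx Tx hT
  obtain ⟨hTxX, hTle⟩ := hT
  set z := x - t • g x with hz
  haveI : Nonempty ↑X := hXne.to_subtype
  have hinf : ‖z - Tx‖ = ⨅ w : X, ‖z - w‖ := by
    apply le_antisymm
    · exact le_ciInf fun w => by simpa [norm_sub_rev] using hTle w w.2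
    · exact ciInf_le ⟨0, fun r ⟨w, hw⟩ => hw ▸ norm_nonneg _⟩ (⟨Tx, hTxX⟩ : X)
  have hproj := (norm_eq_iInf_iff_real_inner_le_zero hXcv hTxX).mp hinf xs hxsX
  have hc := hcv xs x
  have hs := hsm Tx x
  have hfs := hxs Tx hTxX
  have e1 : ⟪z - Tx, xs - Tx⟫ = ⟪x - Tx, xs - Tx⟫ - t * ⟪g x, xs - Tx⟫ := by
    rw [hz, sub_right_comm, inner_sub_left, real_inner_smul_left]
  have e2 : ⟪g x, xs - Tx⟫ = ⟪g x, xs - x⟫ + ⟪g x, x - Tx⟫ := by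
    rw [← inner_add_right]; congr 1; abel
  have e3 : ⟪x - Tx, x - xs⟫ = ‖x - Tx‖ ^ 2 - ⟪x - Tx, xs - Tx⟫ := by
    rw [← real_inner_self_eq_norm_sq, ← inner_sub_right]; congr 1; abel
  have e4 : ⟪g x, Tx - x⟫ = - ⟪g x, x - Tx⟫ := by
    rw [← inner_neg_right]; congr 1; abel
  have e5 : ‖Tx - x‖ = ‖x - Tx‖ := norm_sub_rev _ _
  rw [e1, e2] at hproj
  rw [e4, e5] at hs
  rw [e3]
  have htL : t * L ≤ 1 := by
    rw [← le_div_iff₀ hL] at *; exact ht'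
  -- ⟪x-Tx, xs-Tx⟫ ≤ t * (⟪g x, xs-x⟫ + ⟪g x, x-Tx⟫)
  -- ⟪g x, xs-x⟫ ≤ f xs - f x ;  ⟪g x, x-Tx⟫ ≤ f x - f Tx + L/2 ‖x-Tx‖²
  nlinarith [mul_le_mul_of_nonneg_left (add_le_add (by linarith : ⟪g x, xs - x⟫ ≤ f xs - f x)
      (by linarith : ⟪g x, x - Tx⟫ ≤ f x - f Tx + L / 2 * ‖x - Tx‖ ^ 2)) ht.le,
    sq_nonneg ‖x - Tx‖, mul_nonneg (mul_nonneg ht.le hL.le) (sq_nonneg ‖x - Tx‖),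
    mul_le_mul_of_nonneg_right htL (sq_nonneg ‖x - Tx‖)]
end

section
/- Let f : ℝⁿ → ℝ be convex and L-smooth, X ⊆ ℝⁿ nonempty closed convex, 0 < t ≤ 1/L. Suppose x ∈ X and x⁺ = proj_X(x - ĝ) where the inexact step ĝ satisfies t∇f(x) = ĝ + v for some v ∈ ℝⁿ. Then for every y ∈ X, f(x⁺) - f(y) ≤ (1/t)⟨(x - x⁺) + v, x⁺ - y⟩ + (1/(2t))‖x - x⁺‖². -/
open scoped RealInnerProductSpace
set_option maxHeartbeats 1000000

theorem stmt6 {n : ℕ} (f : EuclideanSpace ℝ (Fin n) → ℝ)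
    (g : EuclideanSpace ℝ (Fin n) → EuclideanSpace ℝ (Fin n))
    (X : Set (EuclideanSpace ℝ (Fin n)))
    (hXne : X.Nonempty) (hXcl : IsClosed X) (hXcv : Convex ℝ X)
    (L t : ℝ) (hL : 0 < L) (ht : 0 < t) (ht' : t ≤ 1 / L)
    (hcv : ∀ x y, 0 ≤ f x - f y - ⟪g y, x - y⟫)
    (hsm : ∀ x y, f x - f y - ⟪g y, x - y⟫ ≤ L / 2 * ‖x - y‖ ^ 2)
    (x gh v xp : EuclideanSpace ℝ (Fin n)) (hxX : x ∈ X)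
    (hproj : IsProj X (x - gh) xp)
    (hv : t • g x = gh + v) :
    ∀ y ∈ X, f xp - f y ≤ 1 / t * ⟪(x - xp) + v, xp - y⟫ + 1 / (2 * t) * ‖x - xp‖ ^ 2 := by
  intro y hy
  obtain ⟨hxpX, hmin⟩ := hproj
  set z := x - gh with hz
  -- projection optimality condition
  have heq : ‖z - xp‖ = ⨅ w : X, ‖z - w‖ := by
    haveI : Nonempty X := ⟨⟨xp, hxpX⟩⟩
    apply le_antisymm
    · apply le_ciInf
      rintro ⟨w, hw⟩
      rw [norm_sub_rev z xp, norm_sub_rev z w]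
      exact hmin w hw
    · have hbdd : BddBelow (Set.range fun w : X => ‖z - (w : EuclideanSpace ℝ (Fin n))‖) := by
        refine ⟨0, ?_⟩
        rintro _ ⟨w, rfl⟩
        exact norm_nonneg _
      exact ciInf_le hbdd ⟨xp, hxpX⟩
  have hopt : ∀ w ∈ X, ⟪z - xp, w - xp⟫ ≤ 0 :=
    (norm_eq_iInf_iff_real_inner_le_zero hXcv hxpX).mp heq
  have h1 : ⟪z - xp, y - xp⟫ ≤ 0 := hopt y hy
  -- smoothness at (xp, x)
  have h2 : f xp - f x - ⟪g x, xp - x⟫ ≤ L / 2 * ‖xp - x‖ ^ 2 := hsm xp x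
  -- convexity: f x - f y ≤ ⟪g x, x - y⟫
  have h3 : 0 ≤ f y - f x - ⟪g x, y - x⟫ := hcv y x
  -- combine inner products
  have hinner : ⟪g x, xp - y⟫ ≤ 1 / t * ⟪(x - xp) + v, xp - y⟫ := by
    have hgh : gh = t • g x - v := by rw [hv]; abel
    have : ⟪x - xp + v - t • g x, y - xp⟫ ≤ 0 := by
      have := h1
      rw [hz, hgh] at this
      convert this using 2
      abel
    rw [inner_sub_left, inner_smul_left] at this
    simp only [conj_trivial] at this
    have h4 : ⟪x - xp + v, y - xp⟫ ≤ t * ⟪g x, y - xp⟫ := by linarith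
    have h5 : ⟪g x, xp - y⟫ = - ⟪g x, y - xp⟫ := by
      rw [← inner_neg_right]; congr 1; abel
    have h6 : ⟪(x - xp) + v, xp - y⟫ = - ⟪x - xp + v, y - xp⟫ := by
      rw [← inner_neg_right]; congr 1; abel
    rw [h5, h6]
    rw [div_mul_eq_mul_div, le_div_iff₀ ht]
    nlinarith
  have hLt : L ≤ 1 / t := by
    rw [le_div_iff₀ ht]
    calc L * t ≤ L * (1 / L) := by
          exact mul_le_mul_of_nonneg_left ht' hL.le
      _ = 1 := mul_one_div_cancel hL.ne'
  have hnorm : L / 2 * ‖xp - x‖ ^ 2 ≤ 1 / (2 * t) * ‖x - xp‖ ^ 2 := by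
    rw [norm_sub_rev]
    have : (0:ℝ) ≤ ‖x - xp‖ ^ 2 := sq_nonneg _
    have h7 : 1 / (2 * t) = (1 / t) / 2 := by ring
    rw [h7]
    apply mul_le_mul_of_nonneg_right _ this
    linarith
  have hgxxy : ⟪g x, xp - y⟫ = ⟪g x, xp - x⟫ + ⟪g x, x - y⟫ := by
    rw [← inner_add_right]; congr 1; abel
  have hgxy : ⟪g x, x - y⟫ = - ⟪g x, y - x⟫ := by
    rw [← inner_neg_right]; congr 1; abel
  nlinarith [hgxxy, hgxy]
end

section
/- Let f : ℝⁿ → ℝ be convex and L-smooth, X ⊆ ℝⁿ nonempty closed convex, 0 < t ≤ 1/L, x ∈ X, and x⁺ = proj_X(x - ĝ) with t∇f(x) = ĝ + v. Then for every y ∈ X, f(x⁺) - f(y) ≤ (1/(2t))‖x - y‖² - (1/(2t))‖x⁺ - y‖² + (1/t)⟨v, x⁺ - y⟩. -/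
set_option maxHeartbeats 1000000


open scoped RealInnerProductSpace

theorem stmt7 {n : ℕ} (f : EuclideanSpace ℝ (Fin n) → ℝ)
    (g : EuclideanSpace ℝ (Fin n) → EuclideanSpace ℝ (Fin n))
    (X : Set (EuclideanSpace ℝ (Fin n)))
    (hXne : X.Nonempty) (hXcl : IsClosed X) (hXcv : Convex ℝ X)
    (L t : ℝ) (hL : 0 < L) (ht : 0 < t) (ht' : t ≤ 1 / L)
    (hcv : ∀ x y, 0 ≤ f x - f y - ⟪g y, x - y⟫)
    (hsm : ∀ x y, f x - f y - ⟪g y, x - y⟫ ≤ L / 2 * ‖x - y‖ ^ 2)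
    (x gh v xp : EuclideanSpace ℝ (Fin n)) (hxX : x ∈ X)
    (hproj : IsProj X (x - gh) xp)
    (hv : t • g x = gh + v) :
    ∀ y ∈ X, f xp - f y ≤ 1 / (2 * t) * ‖x - y‖ ^ 2 - 1 / (2 * t) * ‖xp - y‖ ^ 2
      + 1 / t * ⟪v, xp - y⟫ := by
  intro y hy
  obtain ⟨hxpX, hmin⟩ := hproj
  haveI : Nonempty X := hXne.to_subtype
  -- variational inequality for the projection
  have hinf : ‖(x - gh) - xp‖ = ⨅ w : X, ‖(x - gh) - w‖ := by
    apply le_antisymm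
    · apply le_ciInf; intro w
      calc ‖(x - gh) - xp‖ = ‖xp - (x - gh)‖ := by rw [norm_sub_rev]
        _ ≤ ‖(w : EuclideanSpace ℝ (Fin n)) - (x - gh)‖ := hmin w w.2
        _ = ‖(x - gh) - w‖ := by rw [norm_sub_rev]
    · have := ciInf_le (f := fun w : X => ‖(x - gh) - (w : EuclideanSpace ℝ (Fin n))‖)
        ⟨0, by rintro a ⟨w, rfl⟩; exact norm_nonneg _⟩ ⟨xp, hxpX⟩
      exact this
  have hvar : ⟪(x - gh) - xp, y - xp⟫ ≤ 0 :=
    (norm_eq_iInf_iff_real_inner_le_zero hXcv hxpX).mp hinf y hy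
  have hgh : gh = t • g x - v := (eq_sub_of_add_eq hv.symm)
  rw [hgh] at hvar
  have expand : ⟪x - (t • g x - v) - xp, y - xp⟫
      = -(⟪x - xp, xp - y⟫ + ⟪v, xp - y⟫ - t * ⟪g x, xp - y⟫) := by
    simp only [inner_sub_left, inner_sub_right, real_inner_smul_left]
    ring
  rw [expand] at hvar
  have key : t * ⟪g x, xp - y⟫ ≤ ⟪x - xp, xp - y⟫ + ⟪v, xp - y⟫ := by linarith
  -- smoothness and convexity
  have h1 : f xp - f x ≤ ⟪g x, xp - x⟫ + L / 2 * ‖xp - x‖ ^ 2 := by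
    have := hsm xp x; linarith
  have h2 : f x - f y ≤ ⟪g x, x - y⟫ := by
    have h := hcv y x
    rw [show y - x = -(x - y) from by abel, inner_neg_right] at h
    linarith
  have hsum : ⟪g x, xp - x⟫ + ⟪g x, x - y⟫ = ⟪g x, xp - y⟫ := by
    rw [← inner_add_right]; congr 1; abel
  -- norm identity
  have hid : ‖x - y‖ ^ 2 = ‖x - xp‖ ^ 2 + 2 * ⟪x - xp, xp - y⟫ + ‖xp - y‖ ^ 2 := by
    have h3 : x - y = (x - xp) + (xp - y) := by abel
    rw [h3, norm_add_sq_real]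
  have hnorm : ‖xp - x‖ = ‖x - xp‖ := norm_sub_rev _ _
  -- step size bound : L ≤ 1/t
  have hLt : L / 2 * ‖x - xp‖ ^ 2 ≤ 1 / (2 * t) * ‖x - xp‖ ^ 2 := by
    have hL' : L ≤ 1 / t := by
      rw [le_div_iff₀ ht]
      have h5 : L * t ≤ L * (1 / L) := mul_le_mul_of_nonneg_left ht' hL.le
      have e : L * (1 / L) = 1 := by field_simp
      linarith
    have hsq := sq_nonneg ‖x - xp‖
    have h4 : L / 2 ≤ 1 / (2 * t) := by
      rw [div_le_div_iff₀ (by norm_num) (by positivity)]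
      have h6 := mul_le_mul_of_nonneg_right hL' ht.le
      have e : 1 / t * t = 1 := by field_simp
      nlinarith
    nlinarith
  -- divide key by t
  have tinv : (0:ℝ) < 1 / t := by positivity
  have key' : ⟪g x, xp - y⟫ ≤ 1 / t * (⟪x - xp, xp - y⟫ + ⟪v, xp - y⟫) := by
    have := mul_le_mul_of_nonneg_left key tinv.le
    have ht0 : t ≠ 0 := ne_of_gt ht
    calc ⟪g x, xp - y⟫ = 1 / t * (t * ⟪g x, xp - y⟫) := by field_simp
      _ ≤ 1 / t * (⟪x - xp, xp - y⟫ + ⟪v, xp - y⟫) := this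
  have ht0 : t ≠ 0 := ne_of_gt ht
  have final : 1 / (2 * t) * ‖x - y‖ ^ 2 - 1 / (2 * t) * ‖xp - y‖ ^ 2 + 1 / t * ⟪v, xp - y⟫
      = 1 / t * (⟪x - xp, xp - y⟫ + ⟪v, xp - y⟫) + 1 / (2 * t) * ‖x - xp‖ ^ 2 := by
    rw [hid]; field_simp; ring
  rw [final]
  rw [hnorm] at h1
  linarith
end

section
/- Let f : ℝⁿ → ℝ be μ-strongly convex and L-smooth, X nonempty closed convex, x* = argmin_{x∈X} f(x), 0 < t ≤ 1/L, and Ω ≥ 0, ε > 0 with 4Ω < ε t μ. Suppose a sequence {x^k} ⊆ X satisfies x^{k+1} = proj_X(x^k - ĝ^k) where ‖t∇f(x^k) - ĝ^k‖ ≤ Ω for all k. Then as long as ‖x^{j+1} - x*‖ ≥ ε/2 for all j < k, it holds that ‖x^k - x*‖² ≤ ((1 - tμ)/(1 - 4Ω/ε))^k ‖x^0 - x*‖². -/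
open scoped RealInnerProductSpace

set_option maxHeartbeats 1000000 in
lemma proj_vi {n : ℕ} {X : Set (EuclideanSpace ℝ (Fin n))} (hXcv : Convex ℝ X)
    {z p : EuclideanSpace ℝ (Fin n)} (h : IsProj X z p) :
    ∀ w ∈ X, ⟪z - p, w - p⟫ ≤ 0 := by
  have hp := h.1
  haveI : Nonempty X := ⟨⟨p, hp⟩⟩
  have hbdd : BddBelow (Set.range fun w : X => ‖z - (w : EuclideanSpace ℝ (Fin n))‖) := by
    refine ⟨0, ?_⟩
    rintro _ ⟨w, rfl⟩
    exact norm_nonneg _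
  have hinf : ‖z - p‖ = ⨅ w : X, ‖z - w‖ := by
    apply le_antisymm
    · apply le_ciInf
      intro w
      have h2 := h.2 w w.2
      rwa [norm_sub_rev p z, norm_sub_rev (w : EuclideanSpace ℝ (Fin n)) z] at h2
    · exact ciInf_le hbdd ⟨p, hp⟩
  exact (norm_eq_iInf_iff_real_inner_le_zero hXcv hp).1 hinf

set_option maxHeartbeats 1000000 in
theorem stmt8 {n : ℕ} (f : EuclideanSpace ℝ (Fin n) → ℝ)
    (g : EuclideanSpace ℝ (Fin n) → EuclideanSpace ℝ (Fin n))
    (X : Set (EuclideanSpace ℝ (Fin n)))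
    (hXne : X.Nonempty) (hXcl : IsClosed X) (hXcv : Convex ℝ X)
    (μ L t Ω ε : ℝ) (hμ : 0 < μ) (hL : 0 < L) (ht : 0 < t) (ht' : t ≤ 1 / L)
    (hΩ : 0 ≤ Ω) (hε : 0 < ε) (hΩε : 4 * Ω < ε * t * μ)
    (hsc : ∀ x y, μ / 2 * ‖x - y‖ ^ 2 ≤ f x - f y - ⟪g y, x - y⟫)
    (hsm : ∀ x y, f x - f y - ⟪g y, x - y⟫ ≤ L / 2 * ‖x - y‖ ^ 2)
    (xs : EuclideanSpace ℝ (Fin n)) (hxsX : xs ∈ X) (hxs : ∀ y ∈ X, f xs ≤ f y)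
    (x : ℕ → EuclideanSpace ℝ (Fin n)) (hx0 : x 0 ∈ X)
    (gh : ℕ → EuclideanSpace ℝ (Fin n))
    (hgerr : ∀ k, ‖t • g (x k) - gh k‖ ≤ Ω)
    (hstep : ∀ k, IsProj X (x k - gh k) (x (k + 1))) :
    ∀ k, (∀ j < k, ε / 2 ≤ ‖x (j + 1) - xs‖) →
      ‖x k - xs‖ ^ 2 ≤ ((1 - t * μ) / (1 - 4 * Ω / ε)) ^ k * ‖x 0 - xs‖ ^ 2 := by
  rcases Nat.eq_zero_or_pos n with hn | hn
  · -- trivial case: the space is a subsingleton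
    subst hn
    haveI : Subsingleton (EuclideanSpace ℝ (Fin 0)) := by
      constructor; intro a b; ext i; exact absurd i.2 (Nat.not_lt_zero _)
    intro k _
    have h0 : x 0 = xs := Subsingleton.elim _ _
    have hk : x k = xs := Subsingleton.elim _ _
    simp [h0, hk]
  -- n ≥ 1 : get μ ≤ L
  have hμL : μ ≤ L := by
    set e : EuclideanSpace ℝ (Fin n) := EuclideanSpace.single ⟨0, hn⟩ (1 : ℝ) with he
    have hne : ‖(xs + e) - xs‖ = 1 := by
      simp [he, EuclideanSpace.norm_single]
    have h1 := hsc (xs + e) xs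
    have h2 := hsm (xs + e) xs
    rw [hne] at h1 h2
    nlinarith
  have htμ : t * μ ≤ 1 := by
    have : t * μ ≤ t * L := by nlinarith
    have h2 : t * L ≤ 1 := by
      rw [le_div_iff₀ hL] at ht'
      linarith
    linarith
  have hden : 0 < 1 - 4 * Ω / ε := by
    have h1 : 4 * Ω / ε < t * μ := by
      rw [div_lt_iff₀ hε]; nlinarith
    linarith
  have hnum : 0 ≤ 1 - t * μ := by linarith
  have hc : 0 ≤ (1 - t * μ) / (1 - 4 * Ω / ε) := div_nonneg hnum (le_of_lt hden)
  -- membership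
  have hmem : ∀ k, x k ∈ X := by
    intro k
    cases k with
    | zero => exact hx0
    | succ k => exact (hstep k).1
  -- key per-step inequality
  have hkey : ∀ k, ‖x (k + 1) - xs‖ ^ 2 ≤
      2 * Ω * ‖x (k + 1) - xs‖ + (1 - t * μ) * ‖x k - xs‖ ^ 2 := by
    intro k
    set a := x k with ha
    set b := x (k + 1) with hb
    set e := t • g a - gh k with hee
    have hvi : ⟪(a - gh k) - b, xs - b⟫ ≤ 0 := proj_vi hXcv (hstep k) xs hxsX
    -- decompose the VI inner product
    have hdec : ⟪(a - gh k) - b, xs - b⟫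
        = ⟪a - b, xs - b⟫ - t * ⟪g a, xs - b⟫ + ⟪e, xs - b⟫ := by
      have : (a - gh k) - b = (a - b) - (t • g a) + e := by
        rw [hee]; abel
      rw [this, inner_add_left, inner_sub_left, real_inner_smul_left]
    -- polarization identity
    have hpol : ⟪a - b, xs - b⟫
        = (‖a - b‖ ^ 2 + ‖xs - b‖ ^ 2 - ‖a - xs‖ ^ 2) / 2 := by
      have h := @norm_sub_sq_real (EuclideanSpace ℝ (Fin n)) _ _ (a - b) (xs - b)
      have h2 : (a - b) - (xs - b) = a - xs := by abel
      rw [h2] at h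
      linarith
    -- error term bound
    have herr : -⟪e, xs - b⟫ ≤ Ω * ‖b - xs‖ := by
      have h1 : -⟪e, xs - b⟫ = ⟪e, b - xs⟫ := by
        rw [← inner_neg_right]; congr 1; abel
      rw [h1]
      calc ⟪e, b - xs⟫ ≤ ‖e‖ * ‖b - xs‖ := real_inner_le_norm _ _
        _ ≤ Ω * ‖b - xs‖ := by
            apply mul_le_mul_of_nonneg_right (hgerr k) (norm_nonneg _)
    -- gradient inner product lower bound
    have hsplit : ⟪g a, xs - b⟫ = ⟪g a, xs - a⟫ + ⟪g a, a - b⟫ := by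
      rw [← inner_add_right]; congr 1; abel
    have hg1 := hsc xs a
    have hg2 := hsm b a
    have hg3 := hxs b (hmem (k + 1))
    -- ⟪g a, a - b⟫ = -⟪g a, b - a⟫
    have hg4 : ⟪g a, a - b⟫ = -⟪g a, b - a⟫ := by
      rw [← inner_neg_right]; congr 1; abel
    have hgb : ⟪g a, xs - b⟫ ≤ -(μ / 2) * ‖xs - a‖ ^ 2 + L / 2 * ‖b - a‖ ^ 2 := by
      rw [hsplit, hg4]; linarith
    -- combine
    have hnorm1 : ‖xs - a‖ = ‖a - xs‖ := norm_sub_rev _ _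
    have hnorm2 : ‖b - a‖ = ‖a - b‖ := norm_sub_rev _ _
    have hnorm3 : ‖xs - b‖ = ‖b - xs‖ := norm_sub_rev _ _
    have htL : t * L ≤ 1 := by rw [le_div_iff₀ hL] at ht'; linarith
    have hab : (0:ℝ) ≤ ‖a - b‖ ^ 2 := sq_nonneg _
    have hta : t * ⟪g a, xs - b⟫ ≤ -(t * μ) / 2 * ‖a - xs‖ ^ 2 + t * L / 2 * ‖a - b‖ ^ 2 := by
      have := mul_le_mul_of_nonneg_left hgb (le_of_lt ht)
      rw [hnorm1, hnorm2] at this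
      linarith [this]
    have hab2 : t * L * ‖a - b‖ ^ 2 ≤ ‖a - b‖ ^ 2 := by
      nlinarith
    rw [hdec, hpol] at hvi
    rw [hnorm3] at hvi
    linarith
  -- induction
  intro k
  induction k with
  | zero => intro _; simp
  | succ k ih =>
    intro h
    have hk := ih fun j hj => h j (Nat.lt_succ_of_lt hj)
    have hr : ε / 2 ≤ ‖x (k + 1) - xs‖ := h k (Nat.lt_succ_self k)
    have hkk := hkey k
    have h2 : 2 * Ω * ‖x (k + 1) - xs‖ ≤ (4 * Ω / ε) * ‖x (k + 1) - xs‖ ^ 2 := by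
      have h3 : 2 * Ω ≤ (4 * Ω / ε) * ‖x (k + 1) - xs‖ := by
        rw [div_mul_eq_mul_div, le_div_iff₀ hε]
        nlinarith
      nlinarith [norm_nonneg (x (k + 1) - xs)]
    have hcomb : (1 - 4 * Ω / ε) * ‖x (k + 1) - xs‖ ^ 2 ≤ (1 - t * μ) * ‖x k - xs‖ ^ 2 := by
      nlinarith
    have hstep2 : ‖x (k + 1) - xs‖ ^ 2 ≤
        (1 - t * μ) / (1 - 4 * Ω / ε) * ‖x k - xs‖ ^ 2 := by
      rw [div_mul_eq_mul_div, le_div_iff₀ hden]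
      nlinarith
    calc ‖x (k + 1) - xs‖ ^ 2
        ≤ (1 - t * μ) / (1 - 4 * Ω / ε) * ‖x k - xs‖ ^ 2 := hstep2
      _ ≤ (1 - t * μ) / (1 - 4 * Ω / ε) *
          (((1 - t * μ) / (1 - 4 * Ω / ε)) ^ k * ‖x 0 - xs‖ ^ 2) :=
          mul_le_mul_of_nonneg_left hk hc
      _ = ((1 - t * μ) / (1 - 4 * Ω / ε)) ^ (k + 1) * ‖x 0 - xs‖ ^ 2 := by ring
end

section
/- Under the same assumptions (f μ-strongly convex and L-smooth, 0 < t ≤ 1/L, inexact projected gradient iterates x^{k+1} = proj_X(x^k - ĝ^k) with ‖t∇f(x^k) - ĝ^k‖ ≤ Ω, and ε t μ > 4Ω), as long as ‖x^{j+1} - x*‖ ≥ ε/2 for all j ≤ k, the function values satisfy f(x^{k+1}) - f(x*) ≤ ((1 - 4Ω/ε)/(2t)) · ((1 - tμ)/(1 - 4Ω/ε))^{k+1} ‖x^0 - x*‖². -/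
open scoped RealInnerProductSpace

set_option maxHeartbeats 1600000

theorem stmt9 {n : ℕ} (f : EuclideanSpace ℝ (Fin n) → ℝ)
    (g : EuclideanSpace ℝ (Fin n) → EuclideanSpace ℝ (Fin n))
    (X : Set (EuclideanSpace ℝ (Fin n)))
    (hXne : X.Nonempty) (hXcl : IsClosed X) (hXcv : Convex ℝ X)
    (μ L t Ω ε : ℝ) (hμ : 0 < μ) (hL : 0 < L) (ht : 0 < t) (ht' : t ≤ 1 / L)
    (hΩ : 0 ≤ Ω) (hε : 0 < ε) (hΩε : 4 * Ω < ε * t * μ)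
    (hsc : ∀ x y, μ / 2 * ‖x - y‖ ^ 2 ≤ f x - f y - ⟪g y, x - y⟫)
    (hsm : ∀ x y, f x - f y - ⟪g y, x - y⟫ ≤ L / 2 * ‖x - y‖ ^ 2)
    (xs : EuclideanSpace ℝ (Fin n)) (hxsX : xs ∈ X) (hxs : ∀ y ∈ X, f xs ≤ f y)
    (x : ℕ → EuclideanSpace ℝ (Fin n)) (hx0 : x 0 ∈ X)
    (gh : ℕ → EuclideanSpace ℝ (Fin n))
    (hgerr : ∀ k, ‖t • g (x k) - gh k‖ ≤ Ω)
    (hstep : ∀ k, IsProj X (x k - gh k) (x (k + 1))) :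
    ∀ k, (∀ j ≤ k, ε / 2 ≤ ‖x (j + 1) - xs‖) →
      f (x (k + 1)) - f xs ≤ (1 - 4 * Ω / ε) / (2 * t)
        * ((1 - t * μ) / (1 - 4 * Ω / ε)) ^ (k + 1) * ‖x 0 - xs‖ ^ 2 := by
  intro k hk
  rcases Nat.eq_zero_or_pos n with hn | hn
  · -- trivial case: the space is a subsingleton
    subst hn
    haveI : Subsingleton (EuclideanSpace ℝ (Fin 0)) :=
      ⟨fun a b => PiLp.ext fun i => i.elim0⟩
    have h1 : x (k + 1) = xs := Subsingleton.elim _ _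
    have h2 : x 0 = xs := Subsingleton.elim _ _
    rw [h1, h2]
    simp
  -- nontrivial case
  have htL : t * L ≤ 1 := by rw [le_div_iff₀ hL] at ht'; linarith
  -- μ ≤ L
  have hμL : μ ≤ L := by
    have hne : (EuclideanSpace.single ⟨0, hn⟩ (1:ℝ) : EuclideanSpace ℝ (Fin n)) ≠ 0 := by
      intro h
      have := congrArg (fun w : EuclideanSpace ℝ (Fin n) => w ⟨0, hn⟩) h
      simp [EuclideanSpace.single_apply] at this
    have hnorm : (0:ℝ) < ‖(EuclideanSpace.single ⟨0, hn⟩ (1:ℝ) : EuclideanSpace ℝ (Fin n)) - 0‖ := by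
      rw [sub_zero]; exact norm_pos_iff.mpr hne
    have ha := hsc (EuclideanSpace.single ⟨0, hn⟩ (1:ℝ)) 0
    have hb := hsm (EuclideanSpace.single ⟨0, hn⟩ (1:ℝ)) 0
    nlinarith [pow_pos hnorm 2]
  have htμ : t * μ ≤ 1 := le_trans (by nlinarith) htL
  have hεΩ : 4 * Ω ≤ ε := by nlinarith
  have hden : 0 < 1 - 4 * Ω / ε := by
    rw [sub_pos, div_lt_iff₀ hε]
    nlinarith
  -- variational inequality of projection
  have hVI : ∀ m, ∀ y ∈ X, ⟪(x m - gh m) - x (m + 1), y - x (m + 1)⟫ ≤ 0 := by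
    intro m y hy
    obtain ⟨hmem, hmin⟩ := hstep m
    haveI : Nonempty X := ⟨⟨x (m + 1), hmem⟩⟩
    have heq : ‖(x m - gh m) - x (m + 1)‖ = ⨅ w : X, ‖(x m - gh m) - w‖ := by
      refine le_antisymm ?_ ?_
      · refine le_ciInf fun w => ?_
        rw [norm_sub_rev, norm_sub_rev (x m - gh m) (w : _)]
        exact hmin w w.2
      · have hbdd : BddBelow (Set.range fun w : X => ‖(x m - gh m) - ↑w‖) := by
          refine ⟨0, ?_⟩
          rintro r ⟨w, rfl⟩
          exact norm_nonneg _
        exact ciInf_le hbdd ⟨x (m + 1), hmem⟩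
    exact (norm_eq_iInf_iff_real_inner_le_zero hXcv hmem).mp heq y hy
  -- key single-step estimates
  have key : ∀ m, ε / 2 ≤ ‖x (m + 1) - xs‖ →
      (1 - 4 * Ω / ε) * ‖x (m + 1) - xs‖ ^ 2 ≤ (1 - t * μ) * ‖x m - xs‖ ^ 2 ∧
      f (x (m + 1)) - f xs ≤ (1 - t * μ) / (2 * t) * ‖x m - xs‖ ^ 2 := by
    intro m hB
    set a := x m with ha
    set b := x (m + 1) with hb
    set v := t • g a - gh m with hv
    have hvnorm : ‖v‖ ≤ Ω := hgerr m
    -- rewritten variational inequality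
    have h1 : ⟪a - b, xs - b⟫ + ⟪v, xs - b⟫ ≤ t * ⟪g a, xs - b⟫ := by
      have h := hVI m xs hxsX
      have expand : (a - gh m) - b = ((a - b) + v) - t • g a := by
        rw [hv]; abel
      rw [expand, inner_sub_left, inner_add_left, real_inner_smul_left] at h
      linarith
    -- polarization
    have h2 : ⟪a - b, xs - b⟫ = (‖a - b‖ ^ 2 + ‖b - xs‖ ^ 2 - ‖a - xs‖ ^ 2) / 2 := by
      have hp := norm_sub_sq_real (a - b) (xs - b)
      have hq : (a - b) - (xs - b) = a - xs := by abel
      rw [hq] at hp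
      have hr : ‖xs - b‖ = ‖b - xs‖ := norm_sub_rev _ _
      rw [hr] at hp
      linarith
    -- inner product error bound
    have h4 : -(Ω * ‖b - xs‖) ≤ ⟪v, xs - b⟫ := by
      have hcs := abs_real_inner_le_norm v (xs - b)
      have : |⟪v, xs - b⟫| ≤ Ω * ‖b - xs‖ := by
        rw [norm_sub_rev xs b] at hcs
        calc |⟪v, xs - b⟫| ≤ ‖v‖ * ‖b - xs‖ := hcs
          _ ≤ Ω * ‖b - xs‖ := mul_le_mul_of_nonneg_right hvnorm (norm_nonneg _)
      linarith [neg_abs_le ⟪v, xs - b⟫]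
    -- strong convexity + smoothness
    have hsc' := hsc xs a
    have hsm' := hsm b a
    have hinner : ⟪g a, xs - a⟫ - ⟪g a, b - a⟫ = ⟪g a, xs - b⟫ := by
      rw [← inner_sub_right]
      congr 1
      abel
    have hrev1 : ‖xs - a‖ = ‖a - xs‖ := norm_sub_rev _ _
    have hrev2 : ‖b - a‖ = ‖a - b‖ := norm_sub_rev _ _
    rw [hrev1] at hsc'
    rw [hrev2] at hsm'
    have hq3 : (‖a - b‖ ^ 2 + ‖b - xs‖ ^ 2 - ‖a - xs‖ ^ 2) / 2 - Ω * ‖b - xs‖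
        ≤ t * ⟪g a, xs - b⟫ := by linarith
    have hq : ⟪g a, xs - b⟫ + μ / 2 * ‖a - xs‖ ^ 2 - L / 2 * ‖a - b‖ ^ 2
        ≤ f xs - f b := by linarith
    have hq2 : t * (⟪g a, xs - b⟫ + μ / 2 * ‖a - xs‖ ^ 2 - L / 2 * ‖a - b‖ ^ 2)
        ≤ t * (f xs - f b) := mul_le_mul_of_nonneg_left hq ht.le
    -- master inequality
    have master : (1 / 2) * ‖b - xs‖ ^ 2 - ((1 - t * μ) / 2) * ‖a - xs‖ ^ 2
        - Ω * ‖b - xs‖ + (1 / 2 - t * L / 2) * ‖a - b‖ ^ 2 ≤ t * (f xs - f b) := by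
      nlinarith [hq2, hq3]
    have hopt : f xs ≤ f b := hxs b (hstep m).1
    have hC2 : (0:ℝ) ≤ (1 / 2 - t * L / 2) * ‖a - b‖ ^ 2 := by
      apply mul_nonneg (by linarith) (sq_nonneg _)
    have hB0 : (0:ℝ) < ‖b - xs‖ := lt_of_lt_of_le (by linarith) hB
    constructor
    · -- contraction estimate
      have hS : ‖b - xs‖ ^ 2 - (1 - t * μ) * ‖a - xs‖ ^ 2 - 2 * Ω * ‖b - xs‖ ≤ 0 := by
        nlinarith [master, hC2, mul_le_mul_of_nonneg_left hopt ht.le]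
      have hDε : (4 * Ω / ε) * ε = 4 * Ω := div_mul_cancel₀ _ hε.ne'
      nlinarith [hS, hDε, mul_le_mul_of_nonneg_left hB (mul_nonneg hΩ hB0.le),
        mul_pos hε hB0, sq_nonneg ‖b - xs‖]
    · -- function value estimate
      have h2Ω : 2 * Ω ≤ ‖b - xs‖ := by linarith
      have hΩB : Ω * ‖b - xs‖ ≤ (1 / 2) * ‖b - xs‖ ^ 2 := by nlinarith
      have hf : t * (f b - f xs) ≤ ((1 - t * μ) / 2) * ‖a - xs‖ ^ 2 := by
        nlinarith [master, hC2]
      rw [div_mul_eq_mul_div, le_div_iff₀ (by linarith : (0:ℝ) < 2 * t)]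
      nlinarith [hf]
  -- iterated contraction
  have hqnn : (0:ℝ) ≤ (1 - t * μ) / (1 - 4 * Ω / ε) := div_nonneg (by linarith) hden.le
  have hiter : ∀ m, (∀ j, j < m → ε / 2 ≤ ‖x (j + 1) - xs‖) →
      ‖x m - xs‖ ^ 2 ≤ ((1 - t * μ) / (1 - 4 * Ω / ε)) ^ m * ‖x 0 - xs‖ ^ 2 := by
    intro m
    induction m with
    | zero => intro _; simp
    | succ m ih =>
      intro h
      have hkey := (key m (h m (Nat.lt_succ_self m))).1
      have ihh := ih fun j hj => h j (hj.trans (Nat.lt_succ_self m))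
      have hstep' : ‖x (m + 1) - xs‖ ^ 2
          ≤ (1 - t * μ) / (1 - 4 * Ω / ε) * ‖x m - xs‖ ^ 2 := by
        rw [div_mul_eq_mul_div, le_div_iff₀ hden]
        nlinarith
      calc ‖x (m + 1) - xs‖ ^ 2
          ≤ (1 - t * μ) / (1 - 4 * Ω / ε) * ‖x m - xs‖ ^ 2 := hstep'
        _ ≤ (1 - t * μ) / (1 - 4 * Ω / ε)
            * (((1 - t * μ) / (1 - 4 * Ω / ε)) ^ m * ‖x 0 - xs‖ ^ 2) :=
            mul_le_mul_of_nonneg_left ihh hqnn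
        _ = ((1 - t * μ) / (1 - 4 * Ω / ε)) ^ (m + 1) * ‖x 0 - xs‖ ^ 2 := by
            rw [pow_succ]; ring
  -- conclusion
  have hfk := (key k (hk k le_rfl)).2
  have hAk := hiter k fun j hj => hk j hj.le
  have hcoef : (1 - 4 * Ω / ε) / (2 * t) * ((1 - t * μ) / (1 - 4 * Ω / ε)) ^ (k + 1)
      = (1 - t * μ) / (2 * t) * ((1 - t * μ) / (1 - 4 * Ω / ε)) ^ k := by
    have hqc : (1 - 4 * Ω / ε) * ((1 - t * μ) / (1 - 4 * Ω / ε)) = 1 - t * μ :=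
      mul_div_cancel₀ _ hden.ne'
    calc (1 - 4 * Ω / ε) / (2 * t) * ((1 - t * μ) / (1 - 4 * Ω / ε)) ^ (k + 1)
        = (1 - 4 * Ω / ε) * ((1 - t * μ) / (1 - 4 * Ω / ε)) / (2 * t)
          * ((1 - t * μ) / (1 - 4 * Ω / ε)) ^ k := by rw [pow_succ]; ring
      _ = (1 - t * μ) / (2 * t) * ((1 - t * μ) / (1 - 4 * Ω / ε)) ^ k := by rw [hqc]
  calc f (x (k + 1)) - f xs
      ≤ (1 - t * μ) / (2 * t) * ‖x k - xs‖ ^ 2 := hfk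
    _ ≤ (1 - t * μ) / (2 * t)
        * (((1 - t * μ) / (1 - 4 * Ω / ε)) ^ k * ‖x 0 - xs‖ ^ 2) :=
        mul_le_mul_of_nonneg_left hAk (div_nonneg (by linarith) (by linarith))
    _ = (1 - 4 * Ω / ε) / (2 * t) * ((1 - t * μ) / (1 - 4 * Ω / ε)) ^ (k + 1)
        * ‖x 0 - xs‖ ^ 2 := by rw [hcoef]; ring
end

section
/- Let f : ℝⁿ → ℝ be μ-strongly convex and L-smooth, X nonempty closed convex, x* = argmin_{x∈X} f(x), 0 < t ≤ 1/L, and T(x) = proj_X(x - t∇f(x)). Let T' := (1/t + L)/μ. Then for every x ∈ X, ‖T(x) - x*‖ ≤ T' ‖x - T(x)‖. -/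
open scoped RealInnerProductSpace

set_option maxHeartbeats 800000

section Aux

variable {E : Type*} [NormedAddCommGroup E] [InnerProductSpace ℝ E]

/-- From convexity lower bound and L-smoothness upper bound, the gradient is L-Lipschitz. -/
theorem grad_lipschitz_aux (f : E → ℝ) (g : E → E) (L : ℝ) (hL : 0 < L)
    (hcvx : ∀ x y, (0:ℝ) ≤ f x - f y - ⟪g y, x - y⟫)
    (hsm : ∀ x y, f x - f y - ⟪g y, x - y⟫ ≤ L / 2 * ‖x - y‖ ^ 2) :
    ∀ a b, ‖g a - g b‖ ≤ L * ‖a - b‖ := by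
  have key : ∀ a b, 1 / (2 * L) * ‖g a - g b‖ ^ 2 ≤ f a - f b - ⟪g b, a - b⟫ := by
    intro a b
    set D := g a - g b with hD
    have h1 := hsm (a - (1 / L) • D) a
    have h2 := hcvx (a - (1 / L) • D) b
    have e1 : a - (1 / L) • D - a = -((1 / L) • D) := by abel
    have e2 : a - (1 / L) • D - b = (a - b) - (1 / L) • D := by abel
    rw [e1] at h1
    rw [e2] at h2
    have n1 : ‖-((1 / L) • D)‖ ^ 2 = (1 / L) ^ 2 * ‖D‖ ^ 2 := by
      rw [norm_neg, norm_smul]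
      simp [mul_pow, abs_of_pos (by positivity : (0:ℝ) < 1 / L)]
    rw [n1] at h1
    have i1 : ⟪g a, -((1 / L) • D)⟫ = -(1 / L * ⟪g a, D⟫) := by
      rw [inner_neg_right, real_inner_smul_right]
    have i2 : ⟪g b, a - b - (1 / L) • D⟫ = ⟪g b, a - b⟫ - 1 / L * ⟪g b, D⟫ := by
      rw [inner_sub_right, real_inner_smul_right]
    rw [i1] at h1
    rw [i2] at h2
    have iD : ⟪g a, D⟫ - ⟪g b, D⟫ = ‖D‖ ^ 2 := by
      rw [← inner_sub_left, ← hD, real_inner_self_eq_norm_sq]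
    have hclean : L / 2 * ((1 / L) ^ 2 * ‖D‖ ^ 2) = 1 / (2 * L) * ‖D‖ ^ 2 := by
      field_simp
    rw [hclean] at h1
    have iD' : 1 / L * ⟪g a, D⟫ - 1 / L * ⟪g b, D⟫ = 1 / L * ‖D‖ ^ 2 := by
      rw [← mul_sub, iD]
    have hrel : 1 / (2 * L) * ‖D‖ ^ 2 + 1 / (2 * L) * ‖D‖ ^ 2 = 1 / L * ‖D‖ ^ 2 := by
      field_simp; ring
    linarith
  have mono : ∀ a b, 1 / L * ‖g a - g b‖ ^ 2 ≤ ⟪g a - g b, a - b⟫ := by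
    intro a b
    have k1 := key a b
    have k2 := key b a
    have e1 : ‖g b - g a‖ = ‖g a - g b‖ := norm_sub_rev _ _
    have e2 : ⟪g a - g b, a - b⟫ = ⟪g a, a - b⟫ - ⟪g b, a - b⟫ := inner_sub_left _ _ _
    have e3 : ⟪g a, b - a⟫ = -⟪g a, a - b⟫ := by
      rw [← inner_neg_right]; congr 1; abel
    rw [e1] at k2
    rw [e3] at k2
    have hrel : 1 / (2 * L) * ‖g a - g b‖ ^ 2 + 1 / (2 * L) * ‖g a - g b‖ ^ 2
        = 1 / L * ‖g a - g b‖ ^ 2 := by field_simp; ring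
    linarith
  intro a b
  have hcs : ⟪g a - g b, a - b⟫ ≤ ‖g a - g b‖ * ‖a - b‖ := real_inner_le_norm _ _
  have h := (mono a b).trans hcs
  rcases eq_or_lt_of_le (norm_nonneg (g a - g b)) with h0 | h0
  · rw [← h0]; positivity
  · have h' : ‖g a - g b‖ ^ 2 ≤ L * (‖g a - g b‖ * ‖a - b‖) := by
      have e : ‖g a - g b‖ ^ 2 = L * (1 / L * ‖g a - g b‖ ^ 2) := by
        field_simp
      rw [e]
      exact mul_le_mul_of_nonneg_left h hL.le
    nlinarith [h', h0]

end Aux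

theorem stmt10 {n : ℕ} (f : EuclideanSpace ℝ (Fin n) → ℝ)
    (g : EuclideanSpace ℝ (Fin n) → EuclideanSpace ℝ (Fin n))
    (X : Set (EuclideanSpace ℝ (Fin n)))
    (hXne : X.Nonempty) (hXcl : IsClosed X) (hXcv : Convex ℝ X)
    (μ L t : ℝ) (hμ : 0 < μ) (hL : 0 < L) (ht : 0 < t) (ht' : t ≤ 1 / L)
    (hsc : ∀ x y, μ / 2 * ‖x - y‖ ^ 2 ≤ f x - f y - ⟪g y, x - y⟫)
    (hsm : ∀ x y, f x - f y - ⟪g y, x - y⟫ ≤ L / 2 * ‖x - y‖ ^ 2)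
    (xs : EuclideanSpace ℝ (Fin n)) (hxsX : xs ∈ X) (hxs : ∀ y ∈ X, f xs ≤ f y) :
    ∀ x ∈ X, ∀ Tx : EuclideanSpace ℝ (Fin n), IsProj X (x - t • g x) Tx →
      ‖Tx - xs‖ ≤ (1 / t + L) / μ * ‖x - Tx‖ := by
  -- gradient is L-Lipschitz
  have hcvx : ∀ x y, (0:ℝ) ≤ f x - f y - ⟪g y, x - y⟫ := fun x y =>
    le_trans (by positivity) (hsc x y)
  have hlip := grad_lipschitz_aux f g L hL hcvx hsm
  -- optimality condition at xs
  have hopt : ∀ y ∈ X, (0:ℝ) ≤ ⟪g xs, y - xs⟫ := by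
    intro y hy
    by_contra hcon
    push_neg at hcon
    set c := ⟪g xs, y - xs⟫ with hc
    set q := ‖y - xs‖ ^ 2 with hq
    have hq0 : 0 ≤ q := by positivity
    set s : ℝ := min 1 ((-c) / (L * q + 1)) with hs
    have hd : (0:ℝ) < L * q + 1 := by positivity
    have hs0 : 0 < s := lt_min one_pos (div_pos (neg_pos.mpr hcon) hd)
    have hs1 : s ≤ 1 := min_le_left _ _
    have hs2 : s * (L * q + 1) ≤ -c := by
      have := min_le_right 1 ((-c) / (L * q + 1))
      calc s * (L * q + 1) ≤ (-c) / (L * q + 1) * (L * q + 1) := by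
            exact mul_le_mul_of_nonneg_right this hd.le
        _ = -c := div_mul_cancel₀ _ hd.ne'
    -- the point xs + s • (y - xs) is in X
    set w := xs + s • (y - xs) with hw
    have hwX : w ∈ X := by
      have := hXcv hxsX hy (by linarith : (0:ℝ) ≤ 1 - s) hs0.le (by ring)
      have e : (1 - s) • xs + s • y = xs + s • (y - xs) := by
        rw [sub_smul, smul_sub, one_smul]; abel
      rwa [e] at this
    have hfw := hxs w hwX
    have hsmw := hsm w xs
    have ew : w - xs = s • (y - xs) := by rw [hw]; abel
    rw [ew] at hsmw
    have einner : ⟪g xs, s • (y - xs)⟫ = s * c := real_inner_smul_right _ _ _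
    have enorm : ‖s • (y - xs)‖ ^ 2 = s ^ 2 * q := by
      rw [norm_smul, mul_pow]
      simp [hq, abs_of_pos hs0]
    rw [einner, enorm] at hsmw
    nlinarith
  intro x hx Tx hproj
  obtain ⟨hTxX, hTxmin⟩ := hproj
  set z := x - t • g x with hz
  -- variational inequality for the projection
  have hVI : ∀ w ∈ X, ⟪z - Tx, w - Tx⟫ ≤ 0 := by
    haveI : Nonempty X := ⟨⟨xs, hxsX⟩⟩
    rw [← norm_eq_iInf_iff_real_inner_le_zero hXcv hTxX]
    have hbdd : BddBelow (Set.range fun w : X => ‖z - (w : EuclideanSpace ℝ (Fin n))‖) := by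
      refine ⟨0, ?_⟩
      rintro _ ⟨w, rfl⟩
      exact norm_nonneg _
    apply le_antisymm
    · refine le_ciInf fun w => ?_
      rw [norm_sub_rev]
      exact (hTxmin w w.2).trans (le_of_eq (norm_sub_rev _ _))
    · exact ciInf_le hbdd ⟨Tx, hTxX⟩
  have hVIxs := hVI xs hxsX
  -- strong monotonicity between Tx and xs
  have hmono : μ * ‖Tx - xs‖ ^ 2 ≤ ⟪g Tx - g xs, Tx - xs⟫ := by
    have h1 := hsc Tx xs
    have h2 := hsc xs Tx
    have e1 : ⟪g Tx - g xs, Tx - xs⟫ = ⟪g Tx, Tx - xs⟫ - ⟪g xs, Tx - xs⟫ :=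
      inner_sub_left _ _ _
    have e2 : ⟪g Tx, xs - Tx⟫ = -⟪g Tx, Tx - xs⟫ := by
      rw [← inner_neg_right]; congr 1; abel
    have e3 : ‖xs - Tx‖ = ‖Tx - xs‖ := norm_sub_rev _ _
    rw [e3] at h2
    rw [e2] at h2
    nlinarith
  have hoptTx := hopt Tx hTxX
  have eopt : ⟪g xs, Tx - xs⟫ = -⟪g xs, xs - Tx⟫ := by
    rw [← inner_neg_right]; congr 1; abel
  -- from the VI : t * ⟪g x, Tx - xs⟫ ≤ ⟪x - Tx, Tx - xs⟫
  have hVI' : t * ⟪g x, Tx - xs⟫ ≤ ⟪x - Tx, Tx - xs⟫ := by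
    have e : z - Tx = (x - Tx) - t • g x := by rw [hz]; abel
    have e' : xs - Tx = -(Tx - xs) := by abel
    rw [e, e', inner_sub_left, real_inner_smul_left, inner_neg_right, inner_neg_right]
      at hVIxs
    linarith
  -- Cauchy-Schwarz bounds
  have hcs1 : ⟪g Tx - g x, Tx - xs⟫ ≤ L * ‖x - Tx‖ * ‖Tx - xs‖ := by
    have h1 : ⟪g Tx - g x, Tx - xs⟫ ≤ ‖g Tx - g x‖ * ‖Tx - xs‖ := real_inner_le_norm _ _
    have h2 := hlip Tx x
    have e : ‖Tx - x‖ = ‖x - Tx‖ := norm_sub_rev _ _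
    rw [e] at h2
    nlinarith [norm_nonneg (Tx - xs)]
  have hcs2 : ⟪x - Tx, Tx - xs⟫ ≤ ‖x - Tx‖ * ‖Tx - xs‖ := real_inner_le_norm _ _
  -- assemble
  have esplit : ⟪g Tx - g xs, Tx - xs⟫
      = ⟪g Tx - g x, Tx - xs⟫ + ⟪g x, Tx - xs⟫ - ⟪g xs, Tx - xs⟫ := by
    rw [inner_sub_left, inner_sub_left]; ring
  have hoptTx' : (0:ℝ) ≤ ⟪g xs, Tx - xs⟫ := hopt Tx hTxX
  have hmain : μ * ‖Tx - xs‖ ^ 2 ≤ (1 / t + L) * ‖x - Tx‖ * ‖Tx - xs‖ := by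
    have hgx : ⟪g x, Tx - xs⟫ ≤ 1 / t * (‖x - Tx‖ * ‖Tx - xs‖) := by
      have h := hVI'.trans hcs2
      have h2 : ⟪g x, Tx - xs⟫ ≤ (‖x - Tx‖ * ‖Tx - xs‖) / t := by
        rw [le_div_iff₀ ht]
        linarith
      have e : (‖x - Tx‖ * ‖Tx - xs‖) / t = 1 / t * (‖x - Tx‖ * ‖Tx - xs‖) := by ring
      linarith [e ▸ h2]
    nlinarith [hmono, hcs1]
  rcases eq_or_lt_of_le (norm_nonneg (Tx - xs)) with h0 | h0
  · rw [← h0]; positivity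
  · rw [div_mul_eq_mul_div, le_div_iff₀ hμ]
    have := mul_le_mul_of_nonneg_right hmain (le_of_lt (by positivity : (0:ℝ) < 1))
    nlinarith
end

section
/- Let f be μ-strongly convex and L-smooth, X nonempty closed convex, x* = argmin_{x∈X} f(x), 0 < t ≤ 1/L, T' = (1/t + L)/μ. Suppose x ∈ X and x⁺ = proj_X(x - ĝ) with t∇f(x) = ĝ + v, ‖v‖ ≤ Ω, and additionally ‖x - T(x)‖ ≤ δ, ‖x⁺ - T(x)‖ ≤ ω, ‖x - x⁺‖ ≤ Θ, where T(x) = proj_X(x - t∇f(x)). Then f(x⁺) - f(x*) ≤ (1/t)((Θ + Ω)(ω + δT') + Θ²/2). -/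
open scoped RealInnerProductSpace

lemma aux_limit (c d : ℝ) (h : ∀ l : ℝ, 0 < l → l ≤ 1 → 0 ≤ l * c + l ^ 2 * d) : 0 ≤ c := by
  by_contra hc
  push_neg at hc
  rcases le_or_gt d 0 with hd | hd
  · have := h 1 one_pos le_rfl; nlinarith
  · have hl : 0 < -c / (2 * d) := div_pos (by linarith) (by linarith)
    have h1 : 0 < min 1 (-c / (2 * d)) := lt_min one_pos hl
    have h2 : min 1 (-c / (2 * d)) ≤ -c / (2 * d) := min_le_right _ _
    have h3 := h _ h1 (min_le_left _ _)
    set l := min 1 (-c / (2 * d)) with hldef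
    have h4 : l * d ≤ -c / 2 := by
      rw [le_div_iff₀ (by linarith : (0:ℝ) < 2 * d)] at h2
      nlinarith
    nlinarith [mul_pos h1 hd]

lemma proj_var {n : ℕ} {X : Set (EuclideanSpace ℝ (Fin n))} (hXcv : Convex ℝ X)
    {z p : EuclideanSpace ℝ (Fin n)} (hp : IsProj X z p)
    {y : EuclideanSpace ℝ (Fin n)} (hy : y ∈ X) :
    ⟪z - p, y - p⟫ ≤ 0 := by
  have key : 0 ≤ 2 * ⟪p - z, y - p⟫ := by
    apply aux_limit _ (‖y - p‖ ^ 2)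
    intro l hl hl1
    have hmem : p + l • (y - p) ∈ X := by
      have := hXcv hp.1 hy (by linarith : (0:ℝ) ≤ 1 - l) hl.le (by ring)
      convert this using 1
      module
    have hle := hp.2 _ hmem
    have hsq : ‖p - z‖ ^ 2 ≤ ‖p + l • (y - p) - z‖ ^ 2 := by
      have := norm_nonneg (p - z)
      nlinarith
    have hexp : ‖p + l • (y - p) - z‖ ^ 2
        = ‖p - z‖ ^ 2 + 2 * (l * ⟪p - z, y - p⟫) + l ^ 2 * ‖y - p‖ ^ 2 := by
      have : p + l • (y - p) - z = (p - z) + l • (y - p) := by module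
      rw [this, norm_add_sq_real, real_inner_smul_right, norm_smul]
      simp [abs_of_pos hl]
      ring
    nlinarith
  have heq : ⟪z - p, y - p⟫ = -⟪p - z, y - p⟫ := by
    rw [← inner_neg_left]; congr 1; module
  rw [heq]; linarith


lemma grad_lip {n : ℕ} (f : EuclideanSpace ℝ (Fin n) → ℝ)
    (g : EuclideanSpace ℝ (Fin n) → EuclideanSpace ℝ (Fin n)) (μ L : ℝ)
    (hμ : 0 ≤ μ) (hL : 0 < L)
    (hsc : ∀ x y, μ / 2 * ‖x - y‖ ^ 2 ≤ f x - f y - ⟪g y, x - y⟫)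
    (hsm : ∀ x y, f x - f y - ⟪g y, x - y⟫ ≤ L / 2 * ‖x - y‖ ^ 2)
    (a b : EuclideanSpace ℝ (Fin n)) : ‖g a - g b‖ ≤ L * ‖a - b‖ := by
  have hLi : L * L⁻¹ = 1 := mul_inv_cancel₀ hL.ne'
  have h1 : f (a - L⁻¹ • (g a - g b)) - f a + L⁻¹ * ⟪g a, g a - g b⟫
      ≤ L / 2 * (L⁻¹ ^ 2 * ‖g a - g b‖ ^ 2) := by
    have h := hsm (a - L⁻¹ • (g a - g b)) a
    have ei : ⟪g a, a - L⁻¹ • (g a - g b) - a⟫ = -(L⁻¹ * ⟪g a, g a - g b⟫) := by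
      rw [show a - L⁻¹ • (g a - g b) - a = -(L⁻¹ • (g a - g b)) by module,
        inner_neg_right, real_inner_smul_right]
    have en : ‖a - L⁻¹ • (g a - g b) - a‖ ^ 2 = L⁻¹ ^ 2 * ‖g a - g b‖ ^ 2 := by
      rw [show a - L⁻¹ • (g a - g b) - a = -(L⁻¹ • (g a - g b)) by module,
        norm_neg, norm_smul, Real.norm_eq_abs, abs_of_pos (inv_pos.mpr hL)]
      ring
    rw [ei, en] at h; linarith
  have h2 : 0 ≤ f (a - L⁻¹ • (g a - g b)) - f b
      - (⟪g b, a - b⟫ - L⁻¹ * ⟪g b, g a - g b⟫) := by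
    have h := hsc (a - L⁻¹ • (g a - g b)) b
    have ei : ⟪g b, a - L⁻¹ • (g a - g b) - b⟫
        = ⟪g b, a - b⟫ - L⁻¹ * ⟪g b, g a - g b⟫ := by
      rw [show a - L⁻¹ • (g a - g b) - b = (a - b) - L⁻¹ • (g a - g b) by module,
        inner_sub_right, real_inner_smul_right]
    have h0 : 0 ≤ μ / 2 * ‖a - L⁻¹ • (g a - g b) - b‖ ^ 2 := by positivity
    rw [ei] at h; linarith
  have h3 := hsm a b
  have einner : ⟪g a, g a - g b⟫ - ⟪g b, g a - g b⟫ = ‖g a - g b‖ ^ 2 := by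
    rw [← inner_sub_left, real_inner_self_eq_norm_sq]
  have key : ‖g a - g b‖ ^ 2 ≤ L ^ 2 * ‖a - b‖ ^ 2 := by
    have e2 : L⁻¹ * ⟪g a, g a - g b⟫ - L⁻¹ * ⟪g b, g a - g b⟫ = L⁻¹ * ‖g a - g b‖ ^ 2 := by
      rw [← mul_sub, einner]
    have hLL : L / 2 * (L⁻¹ ^ 2 * ‖g a - g b‖ ^ 2) = L⁻¹ / 2 * ‖g a - g b‖ ^ 2 := by
      rw [show L / 2 * (L⁻¹ ^ 2 * ‖g a - g b‖ ^ 2)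
        = (L * L⁻¹) * (L⁻¹ / 2 * ‖g a - g b‖ ^ 2) by ring, hLi, one_mul]
    have hstep : L⁻¹ / 2 * ‖g a - g b‖ ^ 2 ≤ L / 2 * ‖a - b‖ ^ 2 := by
      rw [hLL] at h1; linarith
    have hm := mul_le_mul_of_nonneg_left hstep hL.le
    have he : L * (L⁻¹ / 2 * ‖g a - g b‖ ^ 2) = ‖g a - g b‖ ^ 2 / 2 := by
      rw [show L * (L⁻¹ / 2 * ‖g a - g b‖ ^ 2)
        = (L * L⁻¹) * (‖g a - g b‖ ^ 2 / 2) by ring, hLi, one_mul]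
    rw [he] at hm; nlinarith
  nlinarith [key, norm_nonneg (g a - g b), norm_nonneg (a - b), hL.le,
    mul_nonneg hL.le (norm_nonneg (a - b))]

lemma foc {n : ℕ} (f : EuclideanSpace ℝ (Fin n) → ℝ)
    (g : EuclideanSpace ℝ (Fin n) → EuclideanSpace ℝ (Fin n))
    (X : Set (EuclideanSpace ℝ (Fin n))) (hXcv : Convex ℝ X) (L : ℝ)
    (hsm : ∀ x y, f x - f y - ⟪g y, x - y⟫ ≤ L / 2 * ‖x - y‖ ^ 2)
    (xs : EuclideanSpace ℝ (Fin n)) (hxsX : xs ∈ X) (hxs : ∀ y ∈ X, f xs ≤ f y)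
    (y : EuclideanSpace ℝ (Fin n)) (hy : y ∈ X) : 0 ≤ ⟪g xs, y - xs⟫ := by
  have key : ∀ l : ℝ, 0 < l → l ≤ 1 →
      0 ≤ l * ⟪g xs, y - xs⟫ + l ^ 2 * (L / 2 * ‖y - xs‖ ^ 2) := by
    intro l hl hl1
    have hmem : xs + l • (y - xs) ∈ X := by
      have := hXcv hxsX hy (by linarith : (0:ℝ) ≤ 1 - l) hl.le (by ring)
      convert this using 1
      module
    have h := hsm (xs + l • (y - xs)) xs
    have ei : ⟪g xs, xs + l • (y - xs) - xs⟫ = l * ⟪g xs, y - xs⟫ := by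
      rw [show xs + l • (y - xs) - xs = l • (y - xs) by module, real_inner_smul_right]
    have en : ‖xs + l • (y - xs) - xs‖ ^ 2 = l ^ 2 * ‖y - xs‖ ^ 2 := by
      rw [show xs + l • (y - xs) - xs = l • (y - xs) by module, norm_smul,
        Real.norm_eq_abs, abs_of_pos hl]; ring
    rw [ei, en] at h
    have := hxs _ hmem
    nlinarith
  exact aux_limit _ _ key

set_option maxHeartbeats 1000000 in
theorem stmt12 {n : ℕ} (f : EuclideanSpace ℝ (Fin n) → ℝ)
    (g : EuclideanSpace ℝ (Fin n) → EuclideanSpace ℝ (Fin n))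
    (X : Set (EuclideanSpace ℝ (Fin n)))
    (hXne : X.Nonempty) (hXcl : IsClosed X) (hXcv : Convex ℝ X)
    (μ L t Ω δ ω Θ : ℝ) (hμ : 0 < μ) (hL : 0 < L) (ht : 0 < t) (ht' : t ≤ 1 / L)
    (hsc : ∀ x y, μ / 2 * ‖x - y‖ ^ 2 ≤ f x - f y - ⟪g y, x - y⟫)
    (hsm : ∀ x y, f x - f y - ⟪g y, x - y⟫ ≤ L / 2 * ‖x - y‖ ^ 2)
    (xs : EuclideanSpace ℝ (Fin n)) (hxsX : xs ∈ X) (hxs : ∀ y ∈ X, f xs ≤ f y)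
    (x gh v xp Tx : EuclideanSpace ℝ (Fin n)) (hxX : x ∈ X)
    (hproj : IsProj X (x - gh) xp)
    (hv : t • g x = gh + v) (hvΩ : ‖v‖ ≤ Ω)
    (hTx : IsProj X (x - t • g x) Tx)
    (hδ : ‖x - Tx‖ ≤ δ) (hω : ‖xp - Tx‖ ≤ ω) (hΘ : ‖x - xp‖ ≤ Θ) :
    f xp - f xs ≤ 1 / t * ((Θ + Ω) * (ω + δ * ((1 / t + L) / μ)) + Θ ^ 2 / 2) := by
  set T' : ℝ := (1 / t + L) / μ with hT'
  have hT'pos : 0 < T' := by positivity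
  have hδ0 : 0 ≤ δ := le_trans (norm_nonneg _) hδ
  have hω0 : 0 ≤ ω := le_trans (norm_nonneg _) hω
  have hΘ0 : 0 ≤ Θ := le_trans (norm_nonneg _) hΘ
  have hΩ0 : 0 ≤ Ω := le_trans (norm_nonneg _) hvΩ
  -- Step B : ‖Tx - xs‖ ≤ T' * ‖x - Tx‖
  have hBstep : ‖Tx - xs‖ ≤ T' * ‖x - Tx‖ := by
    rcases eq_or_lt_of_le (norm_nonneg (Tx - xs)) with hN0 | hNpos
    · rw [← hN0]; positivity
    · have hopt : (0:ℝ) ≤ ⟪g xs, Tx - xs⟫ := foc f g X hXcv L hsm xs hxsX hxs Tx hTx.1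
      have hsc1 := hsc Tx xs
      have hsc2 := hsc xs Tx
      have e1 : ⟪g Tx, xs - Tx⟫ = -⟪g Tx, Tx - xs⟫ := by
        rw [← inner_neg_right]; congr 1; module
      rw [e1, norm_sub_rev xs Tx] at hsc2
      have hmono : μ * ‖Tx - xs‖ ^ 2 ≤ ⟪g Tx, Tx - xs⟫ - ⟪g xs, Tx - xs⟫ := by linarith
      have esplit : ⟪g Tx, Tx - xs⟫ = ⟪g x, Tx - xs⟫ + ⟪g Tx - g x, Tx - xs⟫ := by
        rw [← inner_add_left]; congr 1; module
      have hCS1 : ⟪g Tx - g x, Tx - xs⟫ ≤ ‖g Tx - g x‖ * ‖Tx - xs‖ := real_inner_le_norm _ _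
      have hlip : ‖g Tx - g x‖ ≤ L * ‖Tx - x‖ := grad_lip f g μ L hμ.le hL hsc hsm Tx x
      rw [norm_sub_rev Tx x] at hlip
      have hproj1 : ⟪x - t • g x - Tx, xs - Tx⟫ ≤ 0 := proj_var hXcv hTx hxsX
      have ee : x - t • g x - Tx = (x - Tx) - t • g x := by module
      rw [ee, inner_sub_left, real_inner_smul_left] at hproj1
      have e2 : ⟪g x, xs - Tx⟫ = -⟪g x, Tx - xs⟫ := by
        rw [← inner_neg_right]; congr 1; module
      have e3 : ⟪x - Tx, xs - Tx⟫ = -⟪x - Tx, Tx - xs⟫ := by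
        rw [← inner_neg_right]; congr 1; module
      rw [e2, e3] at hproj1
      have hCS2 : ⟪x - Tx, Tx - xs⟫ ≤ ‖x - Tx‖ * ‖Tx - xs‖ := real_inner_le_norm _ _
      -- t * ⟪g x, Tx - xs⟫ ≤ ‖x - Tx‖ * ‖Tx - xs‖
      have hgx : t * ⟪g x, Tx - xs⟫ ≤ ‖x - Tx‖ * ‖Tx - xs‖ := by linarith only [hproj1, hCS2]
      have hm : ‖g Tx - g x‖ * ‖Tx - xs‖ ≤ L * ‖x - Tx‖ * ‖Tx - xs‖ :=
        mul_le_mul_of_nonneg_right hlip (norm_nonneg (Tx - xs))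
      have hkey : μ * ‖Tx - xs‖ ^ 2
          ≤ ⟪g x, Tx - xs⟫ + L * ‖x - Tx‖ * ‖Tx - xs‖ := by linarith only [hmono, esplit, hopt, hCS1, hm]
      have hkey2 := mul_le_mul_of_nonneg_left hkey ht.le
      have hchain : (t * (μ * ‖Tx - xs‖)) * ‖Tx - xs‖
          ≤ ((1 + t * L) * ‖x - Tx‖) * ‖Tx - xs‖ := by linarith only [hkey2, hgx]
      have hμN : t * (μ * ‖Tx - xs‖) ≤ (1 + t * L) * ‖x - Tx‖ :=
        le_of_mul_le_mul_right hchain hNpos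
      rw [hT', div_mul_eq_mul_div, le_div_iff₀ hμ]
      have hti : t * (1 / t) = 1 := mul_one_div_cancel ht.ne'
      have hr : t * ((1 / t + L) * ‖x - Tx‖)
          = (1 + t * L) * ‖x - Tx‖ := by
        rw [show t * ((1 / t + L) * ‖x - Tx‖)
          = (t * (1 / t)) * ‖x - Tx‖ + t * L * ‖x - Tx‖ by ring, hti]
        ring
      refine le_of_mul_le_mul_left ?_ ht
      rw [hr]
      linarith only [hμN]
  have hTxxs : ‖Tx - xs‖ ≤ δ * T' := by
    calc ‖Tx - xs‖ ≤ T' * ‖x - Tx‖ := hBstep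
    _ ≤ T' * δ := mul_le_mul_of_nonneg_left hδ hT'pos.le
    _ = δ * T' := mul_comm _ _
  -- norm bounds
  have hnv : ‖(x - xp) + v‖ ≤ Θ + Ω := (norm_add_le _ _).trans (add_le_add hΘ hvΩ)
  have hpx : ‖xp - xs‖ ≤ ω + δ * T' := by
    calc ‖xp - xs‖ = ‖(xp - Tx) + (Tx - xs)‖ := by congr 1; module
    _ ≤ ‖xp - Tx‖ + ‖Tx - xs‖ := norm_add_le _ _
    _ ≤ ω + δ * T' := add_le_add hω hTxxs
  -- fundamental inequality
  have hsm1 := hsm xp x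
  have hsc3 := hsc xs x
  have e4 : ⟪g x, xp - x⟫ - ⟪g x, xs - x⟫ = ⟪g x, xp - xs⟫ := by
    rw [← inner_sub_right]; congr 1; module
  have hproj2 : ⟪x - gh - xp, xs - xp⟫ ≤ 0 := proj_var hXcv hproj hxsX
  have hgh : gh = t • g x - v := eq_sub_iff_add_eq.mpr hv.symm
  have ee2 : x - gh - xp = ((x - xp) + v) - t • g x := by rw [hgh]; module
  rw [ee2, inner_sub_left, real_inner_smul_left] at hproj2
  have e5 : ⟪(x - xp) + v, xs - xp⟫ = -⟪(x - xp) + v, xp - xs⟫ := by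
    rw [← inner_neg_right]; congr 1; module
  have e6 : ⟪g x, xs - xp⟫ = -⟪g x, xp - xs⟫ := by
    rw [← inner_neg_right]; congr 1; module
  rw [e5, e6] at hproj2
  -- t * ⟪g x, xp - xs⟫ ≤ ⟪(x - xp) + v, xp - xs⟫
  have hA : ⟪(x - xp) + v, xp - xs⟫ ≤ ‖(x - xp) + v‖ * ‖xp - xs‖ := real_inner_le_norm _ _
  have hAC : ⟪(x - xp) + v, xp - xs⟫ ≤ (Θ + Ω) * (ω + δ * T') := by
    calc ⟪(x - xp) + v, xp - xs⟫ ≤ ‖(x - xp) + v‖ * ‖xp - xs‖ := hA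
    _ ≤ (Θ + Ω) * (ω + δ * T') :=
      mul_le_mul hnv hpx (norm_nonneg _) (by linarith)
  have hBineq : t * ⟪g x, xp - xs⟫ ≤ (Θ + Ω) * (ω + δ * T') := by linarith
  have hL1t : L ≤ 1 / t := by
    rw [le_div_iff₀ ht]
    have := (le_div_iff₀ hL).mp ht'
    linarith [mul_comm t L]
  have hnorm2 : L / 2 * ‖xp - x‖ ^ 2 ≤ 1 / t * (Θ ^ 2 / 2) := by
    rw [norm_sub_rev xp x]
    have h1t : 0 < 1 / t := by positivity
    have hs : ‖x - xp‖ ^ 2 ≤ Θ ^ 2 := pow_le_pow_left₀ (norm_nonneg _) hΘ 2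
    have ha : L / 2 * ‖x - xp‖ ^ 2 ≤ 1 / t / 2 * ‖x - xp‖ ^ 2 :=
      mul_le_mul_of_nonneg_right (by linarith only [hL1t]) (sq_nonneg _)
    have hb : 1 / t / 2 * ‖x - xp‖ ^ 2 ≤ 1 / t / 2 * Θ ^ 2 :=
      mul_le_mul_of_nonneg_left hs (by positivity)
    linarith only [ha, hb]
  -- from hsc3 : f x - f xs ≤ -⟪g x, xs - x⟫
  have hf1 : f xp - f xs ≤ ⟪g x, xp - xs⟫ + L / 2 * ‖xp - x‖ ^ 2 := by
    have h0 : 0 ≤ μ / 2 * ‖xs - x‖ ^ 2 := by positivity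
    linarith only [hsm1, hsc3, e4, h0]
  have hBB : ⟪g x, xp - xs⟫ ≤ 1 / t * ((Θ + Ω) * (ω + δ * T')) := by
    rw [one_div, inv_mul_eq_div, le_div_iff₀ ht]
    linarith only [hBineq]
  calc f xp - f xs ≤ ⟪g x, xp - xs⟫ + L / 2 * ‖xp - x‖ ^ 2 := hf1
  _ ≤ 1 / t * ((Θ + Ω) * (ω + δ * T')) + 1 / t * (Θ ^ 2 / 2) := add_le_add hBB hnorm2
  _ = 1 / t * ((Θ + Ω) * (ω + δ * T') + Θ ^ 2 / 2) := by ring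
end

section
/- Let f be μ-strongly convex and L-smooth, X nonempty closed convex, 0 < t ≤ 1/L with tμ < 1, x* = argmin_{x∈X} f(x), Ω ≥ 0, ε > 0 with 4Ω/ε < tμ, and C = (1 - tμ)/(1 - 4Ω/ε) ∈ (0,1). Let D ≥ ‖x^0 - x*‖² and k_max ≥ log(ε²/(4D))/log(C) (with ε²/4 < D). If the inexact projected gradient iterates x^{k+1} = proj_X(x^k - ĝ^k), ‖t∇f(x^k) - ĝ^k‖ ≤ Ω, satisfy ‖x^{j+1} - x*‖ ≥ ε/2 for all j < k_max, then ‖x^{k_max} - x*‖ ≤ ε/2 and f(x^{k_max}) - f(x*) ≤ (ε² - 4Ωε)/(8t). -/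
set_option maxHeartbeats 1000000

open scoped RealInnerProductSpace

lemma isProj_inner_le {n : ℕ} {X : Set (EuclideanSpace ℝ (Fin n))} (hXcv : Convex ℝ X)
    {z p : EuclideanSpace ℝ (Fin n)} (h : IsProj X z p) :
    ∀ y ∈ X, ⟪z - p, y - p⟫ ≤ 0 := by
  intro y hy
  by_contra hcon
  push_neg at hcon
  set c : ℝ := ⟪z - p, y - p⟫ with hc
  have hq0 : y - p ≠ 0 := by
    intro h0
    rw [hc, h0, inner_zero_right] at hcon
    exact lt_irrefl 0 hcon
  have hqpos : 0 < ‖y - p‖ ^ 2 := pow_pos (norm_pos_iff.mpr hq0) 2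
  set q : ℝ := ‖y - p‖ ^ 2 with hqdef
  set θ : ℝ := min 1 (c / q) with hθ
  have hθ0 : 0 < θ := lt_min one_pos (div_pos hcon hqpos)
  have hθ1 : θ ≤ 1 := min_le_left _ _
  have hθq : θ * q ≤ c := by
    calc θ * q ≤ c / q * q := by
          have := min_le_right 1 (c / q)
          nlinarith
      _ = c := div_mul_cancel₀ _ hqpos.ne'
  have hmem : p + θ • (y - p) ∈ X := by
    have hx := hXcv h.1 hy (by linarith : (0:ℝ) ≤ 1 - θ) hθ0.le (by ring)
    convert hx using 1
    module
  have hle := h.2 _ hmem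
  have hsq : ‖p - z‖ ^ 2 ≤ ‖p + θ • (y - p) - z‖ ^ 2 :=
    pow_le_pow_left₀ (norm_nonneg _) hle 2
  have hw : p + θ • (y - p) - z = (p - z) + θ • (y - p) := by module
  have hexp := norm_add_sq_real (p - z) (θ • (y - p))
  have hin : ⟪p - z, θ • (y - p)⟫ = θ * (-c) := by
    rw [real_inner_smul_right]
    congr 1
    rw [hc, ← inner_neg_left]
    congr 1
    module
  have hns : ‖θ • (y - p)‖ ^ 2 = θ ^ 2 * q := by
    rw [norm_smul, mul_pow, hqdef]
    congr 1
    rw [Real.norm_eq_abs, abs_of_pos hθ0]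
  rw [hin, hns] at hexp
  rw [hw, hexp] at hsq
  nlinarith [mul_pos hθ0 hcon, mul_le_mul_of_nonneg_left hθq hθ0.le]

/-- One-step estimate for the inexact projected gradient method. -/
lemma step_est {n : ℕ} (f : EuclideanSpace ℝ (Fin n) → ℝ)
    (g : EuclideanSpace ℝ (Fin n) → EuclideanSpace ℝ (Fin n))
    {X : Set (EuclideanSpace ℝ (Fin n))} (hXcv : Convex ℝ X)
    {μ L t Ω : ℝ} (ht : 0 < t) (htL : t * L ≤ 1)
    (hsc : ∀ x y, μ / 2 * ‖x - y‖ ^ 2 ≤ f x - f y - ⟪g y, x - y⟫)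
    (hsm : ∀ x y, f x - f y - ⟪g y, x - y⟫ ≤ L / 2 * ‖x - y‖ ^ 2)
    {xs xk xk1 ghk : EuclideanSpace ℝ (Fin n)} (hxsX : xs ∈ X)
    (hgerr : ‖t • g xk - ghk‖ ≤ Ω)
    (hstep : IsProj X (xk - ghk) xk1) :
    t * (f xk1 - f xs) ≤ (1 - t * μ) / 2 * ‖xk - xs‖ ^ 2
      - 1 / 2 * ‖xk1 - xs‖ ^ 2 + Ω * ‖xk1 - xs‖ := by
  have hVI : ⟪xk - ghk - xk1, xs - xk1⟫ ≤ 0 := isProj_inner_le hXcv hstep xs hxsX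
  have hsc1 := hsc xs xk
  have hsm1 := hsm xk1 xk
  have herr : ⟪t • g xk - ghk, xk1 - xs⟫ ≤ Ω * ‖xk1 - xs‖ := by
    calc ⟪t • g xk - ghk, xk1 - xs⟫ ≤ ‖t • g xk - ghk‖ * ‖xk1 - xs‖ := real_inner_le_norm _ _
      _ ≤ Ω * ‖xk1 - xs‖ := by gcongr
  have hid : ‖xk - xs‖ ^ 2 = ‖xk - xk1‖ ^ 2 + 2 * ⟪xk - xk1, xk1 - xs⟫ + ‖xk1 - xs‖ ^ 2 := by
    have h1 := norm_add_sq_real (xk - xk1) (xk1 - xs)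
    have h2 : xk - xk1 + (xk1 - xs) = xk - xs := by abel
    rw [h2] at h1
    linarith
  have hVI' : ⟪ghk, xk1 - xs⟫ ≤ ⟪xk - xk1, xk1 - xs⟫ := by
    have e1 : xk - ghk - xk1 = (xk - xk1) - ghk := by abel
    rw [e1, inner_sub_left] at hVI
    have e2 : ⟪xk - xk1, xs - xk1⟫ = - ⟪xk - xk1, xk1 - xs⟫ := by
      rw [← inner_neg_right]; congr 1; abel
    have e3 : ⟪ghk, xs - xk1⟫ = - ⟪ghk, xk1 - xs⟫ := by
      rw [← inner_neg_right]; congr 1; abel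
    rw [e2, e3] at hVI
    linarith
  have hsmul : ⟪t • g xk, xk1 - xs⟫ = t * ⟪g xk, xk1 - xs⟫ := real_inner_smul_left _ _ _
  have hsplit : ⟪t • g xk, xk1 - xs⟫ = ⟪t • g xk - ghk, xk1 - xs⟫ + ⟪ghk, xk1 - xs⟫ := by
    rw [← inner_add_left]; congr 1; abel
  have hgk : t * ⟪g xk, xk1 - xs⟫
      ≤ Ω * ‖xk1 - xs‖ + 1/2 * (‖xk - xs‖ ^ 2 - ‖xk - xk1‖ ^ 2 - ‖xk1 - xs‖ ^ 2) := by
    rw [← hsmul, hsplit]; nlinarith [hVI', herr]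
  have hdec : ⟪g xk, xk1 - xs⟫ = ⟪g xk, xk1 - xk⟫ - ⟪g xk, xs - xk⟫ := by
    rw [← inner_sub_right]; congr 1; abel
  have hnorm1 : ‖xs - xk‖ = ‖xk - xs‖ := norm_sub_rev _ _
  have hnorm2 : ‖xk1 - xk‖ = ‖xk - xk1‖ := norm_sub_rev _ _
  have hL2 : t * (L / 2 * ‖xk1 - xk‖ ^ 2) ≤ 1 / 2 * ‖xk - xk1‖ ^ 2 := by
    rw [hnorm2]
    nlinarith [sq_nonneg ‖xk - xk1‖, ht.le]
  rw [hnorm1] at hsc1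
  rw [hnorm2] at hsm1
  nlinarith [hgk, mul_le_mul_of_nonneg_left hsm1 ht.le,
    mul_le_mul_of_nonneg_left hsc1 ht.le, hL2, hdec, sq_nonneg ‖xk - xs‖]

theorem stmt16 {n : ℕ} (f : EuclideanSpace ℝ (Fin n) → ℝ)
    (g : EuclideanSpace ℝ (Fin n) → EuclideanSpace ℝ (Fin n))
    (X : Set (EuclideanSpace ℝ (Fin n)))
    (hXne : X.Nonempty) (hXcl : IsClosed X) (hXcv : Convex ℝ X)
    (μ L t Ω ε D : ℝ) (hμ : 0 < μ) (hL : 0 < L) (ht : 0 < t) (ht' : t ≤ 1 / L)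
    (htμ : t * μ < 1)
    (hΩ : 0 ≤ Ω) (hε : 0 < ε) (hΩε : 4 * Ω / ε < t * μ)
    (hsc : ∀ x y, μ / 2 * ‖x - y‖ ^ 2 ≤ f x - f y - ⟪g y, x - y⟫)
    (hsm : ∀ x y, f x - f y - ⟪g y, x - y⟫ ≤ L / 2 * ‖x - y‖ ^ 2)
    (xs : EuclideanSpace ℝ (Fin n)) (hxsX : xs ∈ X) (hxs : ∀ y ∈ X, f xs ≤ f y)
    (x : ℕ → EuclideanSpace ℝ (Fin n)) (hx0 : x 0 ∈ X)
    (gh : ℕ → EuclideanSpace ℝ (Fin n))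
    (hgerr : ∀ k, ‖t • g (x k) - gh k‖ ≤ Ω)
    (hstep : ∀ k, IsProj X (x k - gh k) (x (k + 1)))
    (hD : ‖x 0 - xs‖ ^ 2 ≤ D) (hεD : ε ^ 2 / 4 < D)
    (kmax : ℕ)
    (hkmax : Real.log (ε ^ 2 / (4 * D)) / Real.log ((1 - t * μ) / (1 - 4 * Ω / ε))
      ≤ (kmax : ℝ))
    (hfar : ∀ j < kmax, ε / 2 ≤ ‖x (j + 1) - xs‖) :
    ‖x kmax - xs‖ ≤ ε / 2 ∧ f (x kmax) - f xs ≤ (ε ^ 2 - 4 * Ω * ε) / (8 * t) := by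
  have htL : t * L ≤ 1 := by
    rw [le_div_iff₀ hL] at ht'; nlinarith
  rw [show (4 : ℝ) * Ω / ε = 4 * (Ω / ε) from mul_div_assoc 4 Ω ε] at hkmax hΩε
  set C : ℝ := (1 - t * μ) / (1 - 4 * (Ω / ε)) with hC
  have hde : 0 ≤ Ω / ε := div_nonneg hΩ hε.le
  have hden : 0 < 1 - 4 * (Ω / ε) := by linarith
  have hnum : 0 < 1 - t * μ := by linarith
  have hC0 : 0 < C := div_pos hnum hden
  have hC1 : C < 1 := by
    rw [hC, div_lt_one hden]; linarith
  have hD0 : 0 < D := lt_trans (by positivity) hεD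
  -- one-step estimate for every k
  have hstepest : ∀ k, t * (f (x (k+1)) - f xs) ≤ (1 - t * μ) / 2 * ‖x k - xs‖ ^ 2
      - 1 / 2 * ‖x (k+1) - xs‖ ^ 2 + Ω * ‖x (k+1) - xs‖ := fun k =>
    step_est f g hXcv ht htL hsc hsm hxsX (hgerr k) (hstep k)
  -- absorbing the error for far iterates
  have hOm : ∀ j < kmax, Ω * ‖x (j+1) - xs‖ ≤ 2 * (Ω / ε) * ‖x (j+1) - xs‖ ^ 2 := by
    intro j hj
    have hsn : (0:ℝ) ≤ ‖x (j+1) - xs‖ := norm_nonneg _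
    have hfj : ε / 2 ≤ ‖x (j+1) - xs‖ := hfar j hj
    rw [← sub_nonneg]
    have e : 2 * (Ω / ε) * ‖x (j+1) - xs‖ ^ 2 - Ω * ‖x (j+1) - xs‖
        = Ω * ‖x (j+1) - xs‖ * (2 * ‖x (j+1) - xs‖ - ε) / ε := by
      field_simp
    rw [e]
    exact div_nonneg (mul_nonneg (mul_nonneg hΩ hsn) (by linarith)) hε.le
  -- contraction for far steps
  have hcontr : ∀ j < kmax, ‖x (j+1) - xs‖ ^ 2 ≤ C * ‖x j - xs‖ ^ 2 := by
    intro j hj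
    have h1 := hstepest j
    have h2 : 0 ≤ f (x (j+1)) - f xs := by
      have := hxs (x (j+1)) (hstep j).1; linarith
    have h3 := hOm j hj
    have h0 : 0 ≤ t * (f (x (j+1)) - f xs) := mul_nonneg ht.le h2
    have h4 : (1 - 4 * (Ω / ε)) * ‖x (j+1) - xs‖ ^ 2 ≤ (1 - t * μ) * ‖x j - xs‖ ^ 2 := by
      linarith
    rw [hC, div_mul_eq_mul_div, le_div_iff₀ hden]
    linarith
  -- geometric decay
  have hgeo : ∀ k ≤ kmax, ‖x k - xs‖ ^ 2 ≤ C ^ k * D := by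
    intro k
    induction k with
    | zero => intro _; simpa using hD
    | succ m ih =>
      intro hm
      have hm' : m < kmax := Nat.lt_of_succ_le hm
      calc ‖x (m+1) - xs‖ ^ 2 ≤ C * ‖x m - xs‖ ^ 2 := hcontr m hm'
        _ ≤ C * (C ^ m * D) := mul_le_mul_of_nonneg_left (ih (le_of_lt hm')) hC0.le
        _ = C ^ (m+1) * D := by ring
  -- C ^ kmax * D ≤ ε² / 4
  have hlogC : Real.log C < 0 := Real.log_neg hC0 hC1
  have hA0 : 0 < ε ^ 2 / (4 * D) := by positivity
  have hkey : C ^ kmax * D ≤ ε ^ 2 / 4 := by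
    have h1 : (kmax : ℝ) * Real.log C ≤ Real.log (ε ^ 2 / (4 * D)) := by
      rw [div_le_iff_of_neg hlogC] at hkmax
      linarith
    have h2 : Real.log (C ^ kmax) ≤ Real.log (ε ^ 2 / (4 * D)) := by
      rw [Real.log_pow]; exact_mod_cast h1
    have h3 : C ^ kmax ≤ ε ^ 2 / (4 * D) :=
      (Real.log_le_log_iff (by positivity) hA0).mp h2
    calc C ^ kmax * D ≤ ε ^ 2 / (4 * D) * D := mul_le_mul_of_nonneg_right h3 hD0.le
      _ = ε ^ 2 / 4 := by field_simp
  -- kmax ≥ 1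
  have hk1 : 1 ≤ kmax := by
    by_contra h
    push_neg at h
    interval_cases kmax
    have hAlt : ε ^ 2 / (4 * D) < 1 := by
      rw [div_lt_one (by positivity)]; linarith
    have hlogA : Real.log (ε ^ 2 / (4 * D)) < 0 := Real.log_neg hA0 hAlt
    have hpos : 0 < Real.log (ε ^ 2 / (4 * D)) / Real.log C :=
      div_pos_of_neg_of_neg hlogA hlogC
    rw [Nat.cast_zero] at hkmax
    linarith
  -- first conclusion
  have hsq : ‖x kmax - xs‖ ^ 2 ≤ ε ^ 2 / 4 := le_trans (hgeo kmax le_rfl) hkey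
  have hfirst : ‖x kmax - xs‖ ≤ ε / 2 := by
    nlinarith [norm_nonneg (x kmax - xs)]
  refine ⟨hfirst, ?_⟩
  -- second conclusion: use the step estimate at kmax - 1
  obtain ⟨m, rfl⟩ : ∃ m, kmax = m + 1 := ⟨kmax - 1, by omega⟩
  have h1 := hstepest m
  have h3 := hOm m (Nat.lt_succ_self m)
  have hgm : ‖x m - xs‖ ^ 2 ≤ C ^ m * D := hgeo m (Nat.le_succ m)
  have hkey' : C ^ (m+1) * D ≤ ε ^ 2 / 4 := hkey
  have hb : 0 ≤ ‖x (m+1) - xs‖ ^ 2 := sq_nonneg _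
  have h4 : t * (f (x (m+1)) - f xs) ≤ (1 - t * μ) / 2 * ‖x m - xs‖ ^ 2 := by
    nlinarith [mul_nonneg hden.le hb]
  have h5 : (1 - t * μ) * ‖x m - xs‖ ^ 2 ≤ (1 - 4 * (Ω / ε)) * (C ^ (m+1) * D) := by
    have hCmul : (1 - 4 * (Ω / ε)) * C = 1 - t * μ := by
      rw [hC, mul_div_cancel₀ _ hden.ne']
    have e : (1 - 4 * (Ω / ε)) * (C ^ (m+1) * D) = (1 - t * μ) * (C ^ m * D) := by
      rw [pow_succ, ← hCmul]; ring
    rw [e]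
    exact mul_le_mul_of_nonneg_left hgm hnum.le
  have h6 : t * (f (x (m+1)) - f xs) ≤ (1 - 4 * (Ω / ε)) * (ε ^ 2 / 4) / 2 := by
    have h7 : (1 - 4 * (Ω / ε)) * (C ^ (m+1) * D) ≤ (1 - 4 * (Ω / ε)) * (ε ^ 2 / 4) :=
      mul_le_mul_of_nonneg_left hkey' hden.le
    linarith
  have e2 : (1 - 4 * (Ω / ε)) * (ε ^ 2 / 4) / 2 = (ε ^ 2 - 4 * Ω * ε) / 8 := by
    field_simp
    ring
  rw [e2] at h6
  rw [le_div_iff₀ (by positivity : (0:ℝ) < 8 * t)]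
  nlinarith [h6]
end
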